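/- arXiv:1505.02838 — 6 statements merged into one kernel-verified Lean document; each statement's English description precedes it below -/
import Mathlib

section
/- Let G be a finite simple graph with at least one edge and H a finite simple graph. If the independence complex Ind(G[H]) of the lexicographical product G[H] is shellable, then H is a complete graph K_m for some m ≥ 1. -/
open Finset

variable {V : Type*}

/-- A facet of a collection of faces `Δ` is a maximal face. -/
def IsFacet (Δ : Set (Finset V)) (F : Finset V) : Prop :=
  F ∈ Δ ∧ ∀ G ∈ Δ, F ⊆ G → F = G

/-- A complex is pure if all facets have the same cardinality. -/
def IsPure (Δ : Set (Finset V)) : Prop :=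
  ∀ F G, IsFacet Δ F → IsFacet Δ G → F.card = G.card

/-- Deletion of a vertex from a complex. -/
def del (Δ : Set (Finset V)) (x : V) : Set (Finset V) := {F ∈ Δ | x ∉ F}

/-- Link of a vertex in a complex. -/
def link [DecidableEq V] (Δ : Set (Finset V)) (x : V) : Set (Finset V) :=
  {F ∈ Δ | x ∉ F ∧ insert x F ∈ Δ}

/-- `F : Fin s → Finset V` is a shelling order of the facets of `Δ`. -/
def IsShelling [DecidableEq V] (Δ : Set (Finset V)) {s : ℕ} (F : Fin s → Finset V) : Prop :=
  (∀ i, IsFacet Δ (F i)) ∧ (∀ G, IsFacet Δ G → ∃ i, F i = G) ∧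
  Function.Injective F ∧
  (∀ i j : Fin s, j < i → ∃ x ∈ F i \ F j, ∃ k, k < i ∧ F i \ F k = {x})

/-- A complex is shellable if it is pure and admits a shelling order of its facets. -/
def Shellable [DecidableEq V] (Δ : Set (Finset V)) : Prop :=
  IsPure Δ ∧ ∃ (s : ℕ) (F : Fin s → Finset V), IsShelling Δ F

/-- A pure complex is vertex decomposable if it is a simplex (unique facet), or some vertex
has pure, vertex decomposable deletion and link. -/
inductive VertexDecomposable [DecidableEq V] : Set (Finset V) → Prop
  | simplex (Δ : Set (Finset V)) (h : ∃! F, IsFacet Δ F) : VertexDecomposable Δ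
  | step (Δ : Set (Finset V)) (x : V)
      (hdp : IsPure (del Δ x)) (hlp : IsPure (link Δ x))
      (hd : VertexDecomposable (del Δ x)) (hl : VertexDecomposable (link Δ x)) :
      VertexDecomposable Δ

/-- The independence complex of a graph: all independent sets. -/
def indComplex (G : SimpleGraph V) : Set (Finset V) :=
  {F | ∀ v ∈ F, ∀ w ∈ F, ¬ G.Adj v w}

/-- The lexicographical product `G[H]`. -/
def lexProd {α β : Type*} (G : SimpleGraph α) (H : SimpleGraph β) :
    SimpleGraph (α × β) where
  Adj p q := G.Adj p.1 q.1 ∨ (p.1 = q.1 ∧ H.Adj p.2 q.2)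
  symm := by
    constructor
    rintro p q (h | ⟨h1, h2⟩)
    · exact Or.inl h.symm
    · exact Or.inr ⟨h1.symm, h2.symm⟩
  loopless := by
    constructor
    rintro p (h | ⟨_, h⟩)
    · exact G.irrefl h
    · exact H.irrefl h

/-- The independence number of a graph. -/
noncomputable def indepNum (G : SimpleGraph V) : ℕ :=
  sSup {n | ∃ F : Finset V, F ∈ indComplex G ∧ F.card = n}

/-- The expansion of a graph `G`, where vertex `v` is replaced by `s v` copies,
and distinct vertices `(i,j)` and `(k,l)` are adjacent iff `i ~ k` in `G` or `i = k`. -/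
def expansion (G : SimpleGraph V) (s : V → ℕ) : SimpleGraph (Σ v : V, Fin (s v)) where
  Adj p q := p ≠ q ∧ (G.Adj p.1 q.1 ∨ p.1 = q.1)
  symm := by
    constructor
    rintro p q ⟨h1, h2 | h2⟩
    · exact ⟨h1.symm, Or.inl h2.symm⟩
    · exact ⟨h1.symm, Or.inr h2.symm⟩
  loopless := by constructor; rintro p ⟨h, _⟩; exact h rfl

/-- The circulant graph `C_n(S)`: vertices `x_a`, `x_b` are adjacent iff
`|a-b| ∈ S` or `n - |a-b| ∈ S`. -/
def circulant (n : ℕ) (S : Set ℕ) : SimpleGraph (Fin n) where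
  Adj a b := a ≠ b ∧ ((max a.val b.val - min a.val b.val) ∈ S ∨
      (n - (max a.val b.val - min a.val b.val)) ∈ S)
  symm := by
    constructor
    rintro a b ⟨h1, h2⟩
    refine ⟨h1.symm, ?_⟩
    rwa [max_comm, min_comm]
  loopless := by constructor; rintro a ⟨h, _⟩; exact h rfl


section Aux

lemma extend_facet {V : Type*} [Fintype V] (G : SimpleGraph V) {F : Finset V}
    (hF : F ∈ indComplex G) : ∃ K, IsFacet (indComplex G) K ∧ F ⊆ K := by
  classical
  set s : Finset (Finset V) := Finset.univ.filter (fun K => K ∈ indComplex G ∧ F ⊆ K) with hs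
  have hFs : F ∈ s := by simp [hs, hF]
  obtain ⟨K, hKs, hmax⟩ := s.exists_max_image Finset.card ⟨F, hFs⟩
  simp only [hs, Finset.mem_filter, Finset.mem_univ, true_and] at hKs
  refine ⟨K, ⟨hKs.1, ?_⟩, hKs.2⟩
  intro L hL hKL
  have hLs : L ∈ s := by
    simp only [hs, Finset.mem_filter, Finset.mem_univ, true_and]
    exact ⟨hL, hKs.2.trans hKL⟩
  exact Finset.eq_of_subset_of_card_le hKL (hmax L hLs)

lemma facet_nonempty {β : Type*} [Nonempty β] (H : SimpleGraph β) {M : Finset β}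
    (hM : IsFacet (indComplex H) M) : M.Nonempty := by
  rcases Finset.eq_empty_or_nonempty M with h | h
  · exfalso
    obtain ⟨c⟩ := ‹Nonempty β›
    have h1 : ({c} : Finset β) ∈ indComplex H := by
      intro a ha b hb
      simp only [Finset.mem_singleton] at ha hb
      subst ha; subst hb
      exact H.irrefl
    have h2 := hM.2 {c} h1 (by simp [h])
    rw [h] at h2
    exact Finset.singleton_ne_empty c h2.symm
  · exact h

lemma fiber_card {α β : Type*} [Fintype α] [Fintype β] [DecidableEq α] [DecidableEq β]
    [Nonempty β] (G : SimpleGraph α) (H : SimpleGraph β)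
    (hpure : IsPure (indComplex (lexProd G H)))
    {K : Finset (α × β)} (hK : IsFacet (indComplex (lexProd G H)) K)
    {u : α} {b : β} (hub : (u, b) ∈ K)
    {M : Finset β} (hM : IsFacet (indComplex H) M) :
    (K.filter (fun p => p.1 = u)).card = M.card := by
  classical
  obtain ⟨c0, hc0⟩ := facet_nonempty H hM
  have hKind : ∀ p ∈ K, ∀ q ∈ K, ¬ (lexProd G H).Adj p q := hK.1
  have hMind : ∀ c ∈ M, ∀ d ∈ M, ¬ H.Adj c d := hM.1
  set K' : Finset (α × β) := K.filter (fun p => p.1 ≠ u) ∪ M.image (fun c => (u, c)) with hK'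
  have hmemK' : ∀ p : α × β, p ∈ K' ↔ ((p ∈ K ∧ p.1 ≠ u) ∨ (p.1 = u ∧ p.2 ∈ M)) := by
    intro p
    simp only [hK', Finset.mem_union, Finset.mem_filter, Finset.mem_image]
    constructor
    · rintro (h | ⟨c, hc, rfl⟩)
      · exact Or.inl h
      · exact Or.inr ⟨rfl, hc⟩
    · rintro (h | ⟨h1, h2⟩)
      · exact Or.inl h
      · exact Or.inr ⟨p.2, h2, by rw [← h1]⟩
  have hnoG : ∀ a : α, (∃ d : β, (a, d) ∈ K) → ¬ G.Adj a u := by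
    rintro a ⟨d, hd⟩ hGa
    exact hKind _ hd _ hub (Or.inl hGa)
  have hK'ind : K' ∈ indComplex (lexProd G H) := by
    intro p hp q hq
    rw [hmemK'] at hp hq
    rcases hp with ⟨hpK, hpu⟩ | ⟨hpu, hpM⟩ <;> rcases hq with ⟨hqK, hqu⟩ | ⟨hqu, hqM⟩
    · exact hKind _ hpK _ hqK
    · rintro (h | ⟨h, _⟩)
      · exact hnoG p.1 ⟨p.2, hpK⟩ (by rwa [hqu] at h)
      · exact hpu (h.trans hqu)
    · rintro (h | ⟨h, _⟩)
      · refine hnoG q.1 ⟨q.2, hqK⟩ (G.adj_symm ?_)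
        rwa [hpu] at h
      · exact hqu (h.symm.trans hpu)
    · rintro (h | ⟨_, h⟩)
      · rw [hpu, hqu] at h
        exact G.irrefl h
      · exact hMind _ hpM _ hqM h
  have hK'facet : IsFacet (indComplex (lexProd G H)) K' := by
    refine ⟨hK'ind, ?_⟩
    intro L hL hK'L
    have hc0L : (u, c0) ∈ L := hK'L (by rw [hmemK']; exact Or.inr ⟨rfl, hc0⟩)
    refine Finset.Subset.antisymm hK'L ?_
    rintro ⟨a, d⟩ haL
    rw [hmemK']
    by_cases hau : a = u
    · subst hau
      refine Or.inr ⟨rfl, ?_⟩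
      have hins : insert d M ∈ indComplex H := by
        intro c hc e he
        rcases Finset.mem_insert.mp hc with hcd | hcM <;>
          rcases Finset.mem_insert.mp he with hed | heM
        · rw [hcd, hed]; exact H.irrefl
        · rw [hcd]
          intro hadj
          have h1 : (a, e) ∈ L := hK'L (by rw [hmemK']; exact Or.inr ⟨rfl, heM⟩)
          exact hL _ haL _ h1 (Or.inr ⟨rfl, hadj⟩)
        · rw [hed]
          intro hadj
          have h1 : (a, c) ∈ L := hK'L (by rw [hmemK']; exact Or.inr ⟨rfl, hcM⟩)
          exact hL _ h1 _ haL (Or.inr ⟨rfl, hadj⟩)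
        · exact hMind _ hcM _ heM
      have h2 := hM.2 _ hins (Finset.subset_insert d M)
      rw [h2]
      exact Finset.mem_insert_self d M
    · refine Or.inl ⟨?_, hau⟩
      have hins : insert (a, d) K ∈ indComplex (lexProd G H) := by
        intro p hp q hq
        rcases Finset.mem_insert.mp hp with rfl | hp <;>
          rcases Finset.mem_insert.mp hq with rfl | hq
        · exact (lexProd G H).irrefl
        · intro h
          by_cases hq1 : q.1 = u
          · rcases h with h | ⟨h2, _⟩
            · exact hL _ haL _ hc0L (Or.inl (by rwa [hq1] at h))
            · exact hau (h2.trans hq1)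
          · have hqL : q ∈ L := hK'L (by rw [hmemK']; exact Or.inl ⟨hq, hq1⟩)
            exact hL _ haL _ hqL h
        · intro h
          by_cases hp1 : p.1 = u
          · rcases h with h | ⟨h2, _⟩
            · exact hL _ haL _ hc0L (Or.inl (G.adj_symm (by rwa [hp1] at h)))
            · exact hau (h2.symm.trans hp1)
          · have hpL : p ∈ L := hK'L (by rw [hmemK']; exact Or.inl ⟨hp, hp1⟩)
            exact hL _ hpL _ haL h
        · exact hKind _ hp _ hq
      have h2 := hK.2 _ hins (Finset.subset_insert _ K)
      rw [h2]
      exact Finset.mem_insert_self _ K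
  have hdisj : Disjoint (K.filter (fun p => p.1 ≠ u)) (M.image (fun c => (u, c))) := by
    rw [Finset.disjoint_left]
    rintro p hp hq
    simp only [Finset.mem_filter] at hp
    simp only [Finset.mem_image] at hq
    obtain ⟨c, _, rfl⟩ := hq
    exact hp.2 rfl
  have hcardK' : K'.card = (K.filter (fun p => p.1 ≠ u)).card + M.card := by
    rw [hK', Finset.card_union_of_disjoint hdisj,
      Finset.card_image_of_injective _ (fun c d h => by simpa using congrArg Prod.snd h)]
  have hsplit : (K.filter (fun p => p.1 = u)).card + (K.filter (fun p => p.1 ≠ u)).card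
      = K.card := Finset.card_filter_add_card_filter_not (s := K) (fun p => p.1 = u)
  have hpc := hpure K K' hK hK'facet
  omega

lemma supp_eq_of_sdiff_singleton {α β : Type*} [DecidableEq α] [DecidableEq β]
    {Δ : Set (Finset (α × β))} (hpure : IsPure Δ)
    (hfib : ∀ K, IsFacet Δ K → ∀ u : α, (∃ b, (u, b) ∈ K) →
      2 ≤ (K.filter (fun p => p.1 = u)).card)
    {K1 K2 : Finset (α × β)} (h1 : IsFacet Δ K1) (h2 : IsFacet Δ K2)
    {p0 : α × β} (hd : K1 \ K2 = {p0}) :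
    K1.image Prod.fst = K2.image Prod.fst := by
  classical
  have key : ∀ A B : Finset (α × β), IsFacet Δ A → IsFacet Δ B → (A \ B).card = 1 →
      A.image Prod.fst ⊆ B.image Prod.fst := by
    intro A B hA hB hc u hu
    by_contra hnB
    simp only [Finset.mem_image] at hu hnB
    obtain ⟨p, hp, hpu⟩ := hu
    push_neg at hnB
    have hsub : A.filter (fun q => q.1 = u) ⊆ A \ B := by
      intro q hq
      simp only [Finset.mem_filter] at hq
      rw [Finset.mem_sdiff]
      exact ⟨hq.1, fun hqB => hnB q hqB hq.2⟩
    have h2le := hfib A hA u ⟨p.2, by rw [← hpu]; exact hp⟩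
    have hle := Finset.card_le_card hsub
    omega
  have hc1 : (K1 \ K2).card = 1 := by rw [hd]; simp
  have hc2 : (K2 \ K1).card = 1 := by
    have e1 := Finset.card_sdiff_add_card_inter K1 K2
    have e2 := Finset.card_sdiff_add_card_inter K2 K1
    rw [Finset.inter_comm] at e2
    have hpc := hpure K1 K2 h1 h2
    omega
  exact Finset.Subset.antisymm (key K1 K2 h1 h2 hc1) (key K2 K1 h2 h1 hc2)

end Aux

theorem stmt4 {α β : Type*} [Fintype α] [Fintype β] [DecidableEq α] [DecidableEq β]
    [Nonempty β] (G : SimpleGraph α) (H : SimpleGraph β)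
    (hG : ∃ v w, G.Adj v w)
    (hsh : Shellable (indComplex (lexProd G H))) :
    ∃ m : ℕ, 1 ≤ m ∧ Nonempty (H ≃g (⊤ : SimpleGraph (Fin m))) := by
  classical
  by_cases hH : ∀ x y : β, x ≠ y → H.Adj x y
  · refine ⟨Fintype.card β, Fintype.card_pos, ⟨⟨Fintype.equivFin β, ?_⟩⟩⟩
    intro a b
    simp only [SimpleGraph.top_adj, ne_eq, EmbeddingLike.apply_eq_iff_eq]
    constructor
    · intro h; exact hH a b h
    · intro h; exact H.ne_of_adj h
  · exfalso
    push_neg at hH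
    obtain ⟨x, y, hxy, hnadj⟩ := hH
    obtain ⟨v, w, hvw⟩ := hG
    obtain ⟨hpure, s, Fo, hFfacet, hFsurj, hFinj, hFshell⟩ := hsh
    have hxyind : ({x, y} : Finset β) ∈ indComplex H := by
      intro c hc d hd
      simp only [Finset.mem_insert, Finset.mem_singleton] at hc hd
      rcases hc with rfl | rfl <;> rcases hd with rfl | rfl
      · exact H.irrefl
      · exact hnadj
      · exact fun h => hnadj (H.adj_symm h)
      · exact H.irrefl
    obtain ⟨M, hMfacet, hMsub⟩ := extend_facet H hxyind
    have hM2 : 2 ≤ M.card := by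
      have hle := Finset.card_le_card hMsub
      rwa [Finset.card_insert_of_notMem (by simpa using hxy), Finset.card_singleton] at hle
    have hfib : ∀ K, IsFacet (indComplex (lexProd G H)) K → ∀ u : α, (∃ b, (u, b) ∈ K) →
        2 ≤ (K.filter (fun p => p.1 = u)).card := by
      rintro K hK u ⟨b, hb⟩
      rw [fiber_card G H hpure hK hb hMfacet]
      exact hM2
    have hsingle : ∀ p : α × β, ({p} : Finset (α × β)) ∈ indComplex (lexProd G H) := by
      intro p q hq r hr
      simp only [Finset.mem_singleton] at hq hr
      subst hq; subst hr
      exact (lexProd G H).irrefl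
    obtain ⟨Kv, hKv, hKvsub⟩ := extend_facet (lexProd G H) (hsingle (v, x))
    obtain ⟨Kw, hKw, hKwsub⟩ := extend_facet (lexProd G H) (hsingle (w, x))
    have hvKv : (v, x) ∈ Kv := hKvsub (Finset.mem_singleton_self _)
    have hwKw : (w, x) ∈ Kw := hKwsub (Finset.mem_singleton_self _)
    have hsuppne : Kv.image Prod.fst ≠ Kw.image Prod.fst := by
      intro h
      have hv : v ∈ Kw.image Prod.fst := by
        rw [← h]; exact Finset.mem_image_of_mem _ hvKv
      simp only [Finset.mem_image] at hv
      obtain ⟨p, hp, hpv⟩ := hv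
      exact hKw.1 _ hp _ hwKw (Or.inl (by rw [hpv]; exact hvw))
    obtain ⟨iv, hiv⟩ := hFsurj Kv hKv
    obtain ⟨iw, hiw⟩ := hFsurj Kw hKw
    have hs0 : 0 < s := iv.pos
    set z : Fin s := ⟨0, hs0⟩ with hz
    set T : Finset (Fin s) :=
      Finset.univ.filter (fun i => (Fo i).image Prod.fst ≠ (Fo z).image Prod.fst) with hT
    have hTne : T.Nonempty := by
      by_cases hv0 : Kv.image Prod.fst = (Fo z).image Prod.fst
      · refine ⟨iw, ?_⟩
        simp only [hT, Finset.mem_filter, Finset.mem_univ, true_and, hiw]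
        rw [← hv0]
        exact fun h => hsuppne h.symm
      · refine ⟨iv, ?_⟩
        simp only [hT, Finset.mem_filter, Finset.mem_univ, true_and, hiv]
        exact hv0
    set i := T.min' hTne with hi
    have hiT : i ∈ T := T.min'_mem hTne
    have hine : (Fo i).image Prod.fst ≠ (Fo z).image Prod.fst := by
      simp only [hT, Finset.mem_filter, Finset.mem_univ, true_and] at hiT
      exact hiT
    have hzi : z < i := by
      have hne : i ≠ z := fun h => hine (by rw [h])
      rw [Fin.lt_def]
      exact Nat.pos_of_ne_zero (fun h => hne (Fin.ext h))
    obtain ⟨x0, hx0, k, hki, hFik⟩ := hFshell i z hzi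
    have hsupp := supp_eq_of_sdiff_singleton hpure hfib (hFfacet i) (hFfacet k) hFik
    have hkT : k ∈ T := by
      simp only [hT, Finset.mem_filter, Finset.mem_univ, true_and]
      rw [← hsupp]
      exact hine
    exact absurd (T.min'_le k hkT) (not_le.mpr hki)
end

section
/- Let G be a finite simple graph with at least one edge and H a finite simple graph that is not a complete graph (i.e., H has two distinct nonadjacent vertices). Then the independence complex Ind(G[H]) of the lexicographical product G[H] is not shellable. -/
open Finset

variable {V : Type*}

lemma exists_facet_superset {V : Type*} [Fintype V] [DecidableEq V]
    (Δ : Set (Finset V)) (F : Finset V) (hF : F ∈ Δ) :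
    ∃ S, IsFacet Δ S ∧ F ⊆ S := by
  obtain ⟨S, hS, hmax⟩ := Set.Finite.exists_maximalFor Finset.card
    {S | S ∈ Δ ∧ F ⊆ S} (Set.toFinite _) ⟨F, hF, subset_rfl⟩
  refine ⟨S, ⟨hS.1, fun T hT hST => ?_⟩, hS.2⟩
  exact Finset.eq_of_subset_of_card_le hST
    (hmax ⟨hT, hS.2.trans hST⟩ (Finset.card_le_card hST))

theorem stmt5 {α β : Type*} [Fintype α] [Fintype β] [DecidableEq α] [DecidableEq β]
    (G : SimpleGraph α) (H : SimpleGraph β)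
    (hG : ∃ v w, G.Adj v w)
    (y z : β) (hyz : y ≠ z) (hna : ¬ H.Adj y z) :
    ¬ Shellable (indComplex (lexProd G H)) := by
  rintro ⟨hpure, s, Fsh, hfac, hsurj, hinj, hshell⟩
  obtain ⟨v, w, hvw⟩ := hG
  have hmem : ∀ S : Finset (α × β), S ∈ indComplex (lexProd G H) ↔
      ∀ p ∈ S, ∀ q ∈ S, ¬ (lexProd G H).Adj p q := fun S => Iff.rfl
  -- projections of faces are independent in G
  have hprojind : ∀ S : Finset (α × β), S ∈ indComplex (lexProd G H) →
      ∀ c ∈ S.image Prod.fst, ∀ a ∈ S.image Prod.fst, ¬ G.Adj c a := by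
    intro S hS c hc a ha hadj
    obtain ⟨p, hp, rfl⟩ := Finset.mem_image.mp hc
    obtain ⟨q, hq, rfl⟩ := Finset.mem_image.mp ha
    exact (hmem S).mp hS p hp q hq (Or.inl hadj)
  -- projections of facets are maximal independent in G
  have hprojmax : ∀ S, IsFacet (indComplex (lexProd G H)) S →
      ∀ c, c ∉ S.image Prod.fst → ∃ a ∈ S.image Prod.fst, G.Adj c a := by
    intro S hS c hc
    by_contra hno
    push_neg at hno
    have hins : insert (c, y) S ∈ indComplex (lexProd G H) := by
      rw [hmem]
      intro p hp q hq hadj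
      rcases Finset.mem_insert.mp hp with rfl | hp
      · rcases Finset.mem_insert.mp hq with rfl | hq
        · exact (lexProd G H).irrefl hadj
        · rcases hadj with h | ⟨h1, h2⟩
          · exact hno q.1 (Finset.mem_image.mpr ⟨q, hq, rfl⟩) h
          · exact hc (Finset.mem_image.mpr ⟨q, hq, h1.symm⟩)
      · rcases Finset.mem_insert.mp hq with rfl | hq
        · rcases hadj with h | ⟨h1, h2⟩
          · exact hno p.1 (Finset.mem_image.mpr ⟨p, hp, rfl⟩) h.symm
          · exact hc (Finset.mem_image.mpr ⟨p, hp, h1⟩)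
        · exact (hmem S).mp hS.1 p hp q hq hadj
    have heq := hS.2 _ hins (Finset.subset_insert _ _)
    exact hc (Finset.mem_image.mpr ⟨(c, y), heq ▸ Finset.mem_insert_self _ _, rfl⟩)
  -- a maximal independent set of H containing {y, z}
  have hyzind : ({y, z} : Finset β) ∈ indComplex H := by
    intro p hp q hq hadj
    simp only [Finset.mem_insert, Finset.mem_singleton] at hp hq
    rcases hp with rfl | rfl <;> rcases hq with rfl | rfl
    · exact H.irrefl hadj
    · exact hna hadj
    · exact hna hadj.symm
    · exact H.irrefl hadj
  obtain ⟨M, hMfac, hMsub⟩ := exists_facet_superset (indComplex H) {y, z} hyzind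
  have hMcard : 2 ≤ M.card := by
    refine Finset.one_lt_card.mpr ⟨y, hMsub ?_, z, hMsub ?_, hyz⟩ <;> simp
  -- every fiber of a facet has at least two elements
  have hfiber2 : ∀ S, IsFacet (indComplex (lexProd G H)) S → ∀ a, a ∈ S.image Prod.fst →
      2 ≤ (S.filter (fun p => p.1 = a)).card := by
    intro S hS a ha
    have haS : ∃ b, (a, b) ∈ S := by
      obtain ⟨p, hp, hpa⟩ := Finset.mem_image.mp ha
      exact ⟨p.2, by rw [← hpa]; simpa using hp⟩
    obtain ⟨b0, hb0⟩ := haS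
    have hnadj : ∀ p : α × β, p ∈ S → p.1 ≠ a → ¬ G.Adj p.1 a := by
      intro p hp hpa h
      exact (hmem S).mp hS.1 p hp (a, b0) hb0 (Or.inl h)
    have hF'ind : (S.filter (fun p => p.1 ≠ a)) ∪ M.image (fun m => (a, m)) ∈
        indComplex (lexProd G H) := by
      rw [hmem]
      intro p hp q hq hadj
      rcases Finset.mem_union.mp hp with hp | hp <;> rcases Finset.mem_union.mp hq with hq | hq
      · exact (hmem S).mp hS.1 p (Finset.mem_filter.mp hp).1 q (Finset.mem_filter.mp hq).1 hadj
      · obtain ⟨m, hm, rfl⟩ := Finset.mem_image.mp hq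
        obtain ⟨hpS, hpa⟩ := Finset.mem_filter.mp hp
        rcases hadj with h | ⟨h1, h2⟩
        · exact hnadj p hpS hpa h
        · exact hpa h1
      · obtain ⟨m, hm, rfl⟩ := Finset.mem_image.mp hp
        obtain ⟨hqS, hqa⟩ := Finset.mem_filter.mp hq
        rcases hadj with h | ⟨h1, h2⟩
        · exact hnadj q hqS hqa h.symm
        · exact hqa h1.symm
      · obtain ⟨m, hm, rfl⟩ := Finset.mem_image.mp hp
        obtain ⟨m', hm', rfl⟩ := Finset.mem_image.mp hq
        rcases hadj with h | ⟨h1, h2⟩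
        · exact G.irrefl h
        · exact hMfac.1 m hm m' hm' h2
    obtain ⟨T, hT, hsub⟩ := exists_facet_superset _ _ hF'ind
    have hcardTS : S.card = T.card := hpure S T hS hT
    have hdisj : Disjoint (S.filter (fun p => p.1 ≠ a)) (M.image fun m => (a, m)) := by
      rw [Finset.disjoint_left]
      rintro p hp hq
      obtain ⟨m, hm, rfl⟩ := Finset.mem_image.mp hq
      exact (Finset.mem_filter.mp hp).2 rfl
    have hcard1 : (M.image fun m => (a, m)).card = M.card :=
      Finset.card_image_of_injOn (fun x _ y _ h => by simpa using h)
    have hsplit : (S.filter (fun p => p.1 = a)).card + (S.filter (fun p => p.1 ≠ a)).card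
        = S.card := Finset.card_filter_add_card_filter_not _
    have hunion : ((S.filter (fun p => p.1 ≠ a)) ∪ M.image (fun m => (a, m))).card
        = (S.filter (fun p => p.1 ≠ a)).card + M.card := by
      rw [Finset.card_union_of_disjoint hdisj, hcard1]
    have hle := Finset.card_le_card hsub
    rw [hunion] at hle
    omega
  -- facets with different projections cannot differ by a single vertex
  have hcross : ∀ S T : Finset (α × β), IsFacet (indComplex (lexProd G H)) S →
      IsFacet (indComplex (lexProd G H)) T →
      S.image Prod.fst ≠ T.image Prod.fst → ∀ x, S \ T ≠ {x} := by
    intro S T hS hT hne x hdiff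
    by_cases hsub : S.image Prod.fst ⊆ T.image Prod.fst
    · obtain ⟨c, hcT, hcS⟩ := Finset.exists_of_ssubset (hsub.ssubset_of_ne hne)
      obtain ⟨a, haS, hadj⟩ := hprojmax S hS c hcS
      exact hprojind T hT.1 c hcT a (hsub haS) hadj
    · obtain ⟨a, haS, haT⟩ := Finset.not_subset.mp hsub
      have h2 := hfiber2 S hS a haS
      have hsub2 : S.filter (fun p => p.1 = a) ⊆ S \ T := by
        intro p hp
        obtain ⟨hpS, hpa⟩ := Finset.mem_filter.mp hp
        exact Finset.mem_sdiff.mpr ⟨hpS, fun hpT => haT (Finset.mem_image.mpr ⟨p, hpT, hpa⟩)⟩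
      have hle := Finset.card_le_card hsub2
      rw [hdiff] at hle
      simp only [Finset.card_singleton] at hle
      omega
  -- two facets with different projections
  have hsingle : ∀ c : α, ({(c, y)} : Finset (α × β)) ∈ indComplex (lexProd G H) := by
    intro c p hp q hq hadj
    rw [Finset.mem_singleton] at hp hq
    subst hp hq
    exact (lexProd G H).irrefl hadj
  obtain ⟨Sv, hSvfac, hSvsub⟩ := exists_facet_superset _ _ (hsingle v)
  obtain ⟨Sw, hSwfac, hSwsub⟩ := exists_facet_superset _ _ (hsingle w)
  have hvSv : v ∈ Sv.image Prod.fst :=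
    Finset.mem_image.mpr ⟨(v, y), hSvsub (Finset.mem_singleton_self _), rfl⟩
  have hwSw : w ∈ Sw.image Prod.fst :=
    Finset.mem_image.mpr ⟨(w, y), hSwsub (Finset.mem_singleton_self _), rfl⟩
  have hvSw : v ∉ Sw.image Prod.fst := fun hv => hprojind Sw hSwfac.1 v hv w hwSw hvw
  have hne' : Sv.image Prod.fst ≠ Sw.image Prod.fst := fun h => hvSw (h ▸ hvSv)
  -- the minimal index with a different projection
  obtain ⟨iv, hiv⟩ := hsurj Sv hSvfac
  have hspos : 0 < s := lt_of_le_of_lt (Nat.zero_le _) iv.isLt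
  set i0 : Fin s := ⟨0, hspos⟩ with hi0def
  have hTne : ∃ i, (Fsh i).image Prod.fst ≠ (Fsh i0).image Prod.fst := by
    obtain ⟨iw, hiw⟩ := hsurj Sw hSwfac
    by_cases h : Sv.image Prod.fst = (Fsh i0).image Prod.fst
    · exact ⟨iw, by rw [hiw, ← h]; exact fun hh => hne' hh.symm⟩
    · exact ⟨iv, by rw [hiv]; exact h⟩
  have hTsetne : (Finset.univ.filter
      (fun i => (Fsh i).image Prod.fst ≠ (Fsh i0).image Prod.fst)).Nonempty :=
    ⟨hTne.choose, by simp [hTne.choose_spec]⟩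
  set i := (Finset.univ.filter
      (fun i => (Fsh i).image Prod.fst ≠ (Fsh i0).image Prod.fst)).min' hTsetne with hidef
  have hiT : i ∈ Finset.univ.filter
      (fun i => (Fsh i).image Prod.fst ≠ (Fsh i0).image Prod.fst) := Finset.min'_mem _ _
  have hiproj : (Fsh i).image Prod.fst ≠ (Fsh i0).image Prod.fst :=
    (Finset.mem_filter.mp hiT).2
  have hi0lt : i0 < i := by
    have hne0 : i ≠ i0 := fun h => hiproj (by rw [h])
    exact Fin.lt_def.mpr (Nat.pos_of_ne_zero (fun h => hne0 (Fin.ext h)))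
  obtain ⟨x, hx, k, hk, hdiff⟩ := hshell i i0 hi0lt
  have hkT : k ∉ Finset.univ.filter
      (fun i => (Fsh i).image Prod.fst ≠ (Fsh i0).image Prod.fst) :=
    fun hkmem => absurd (Finset.min'_le _ _ hkmem) (not_le.mpr hk)
  have hkproj : (Fsh k).image Prod.fst = (Fsh i0).image Prod.fst := by
    by_contra h
    exact hkT (Finset.mem_filter.mpr ⟨Finset.mem_univ _, h⟩)
  exact hcross (Fsh i) (Fsh k) (hfac i) (hfac k)
    (by rw [hkproj]; exact hiproj) x hdiff
end

section
/- Let G and H be finite simple graphs. Then the independence number of the lexicographical product satisfies α(G[H]) = α(G)·α(H). -/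
open Finset

variable {V : Type*}

lemma mem_indep_empty {α : Type*} (G : SimpleGraph α) : (∅ : Finset α) ∈ indComplex G := by
  intro v hv; simp at hv

lemma indep_bdd {α : Type*} [Fintype α] (G : SimpleGraph α) :
    BddAbove {n | ∃ F : Finset α, F ∈ indComplex G ∧ F.card = n} := by
  refine ⟨Fintype.card α, ?_⟩
  rintro n ⟨F, _, rfl⟩
  exact F.card_le_univ.trans_eq Finset.card_univ

lemma indep_le {α : Type*} [Fintype α] (G : SimpleGraph α) (F : Finset α)
    (hF : F ∈ indComplex G) : F.card ≤ indepNum G :=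
  le_csSup (indep_bdd G) ⟨F, hF, rfl⟩

lemma indep_exists {α : Type*} [Fintype α] (G : SimpleGraph α) :
    ∃ A : Finset α, A ∈ indComplex G ∧ A.card = indepNum G := by
  have h := Nat.sSup_mem (s := {n | ∃ F : Finset α, F ∈ indComplex G ∧ F.card = n})
    ⟨0, ∅, mem_indep_empty G, Finset.card_empty⟩ (indep_bdd G)
  exact h

theorem stmt7 {α β : Type*} [Fintype α] [Fintype β]
    (G : SimpleGraph α) (H : SimpleGraph β) :
    indepNum (lexProd G H) = indepNum G * indepNum H := by
  classical
  obtain ⟨A, hA, hAcard⟩ := indep_exists G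
  obtain ⟨B, hB, hBcard⟩ := indep_exists H
  apply le_antisymm
  · -- upper bound
    obtain ⟨F, hF, hFcard⟩ := indep_exists (lexProd G H)
    rw [← hFcard]
    have hsum := Finset.card_eq_sum_card_fiberwise
      (f := Prod.fst) (s := F) (t := F.image Prod.fst)
      (fun x hx => Finset.mem_image_of_mem _ hx)
    rw [hsum]
    have himg : F.image Prod.fst ∈ indComplex G := by
      intro v hv w hw hvw
      obtain ⟨p, hp, rfl⟩ := Finset.mem_image.mp hv
      obtain ⟨q, hq, rfl⟩ := Finset.mem_image.mp hw
      exact hF p hp q hq (Or.inl hvw)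
    have hfib : ∀ a ∈ F.image Prod.fst,
        (F.filter (fun p => p.1 = a)).card ≤ indepNum H := by
      intro a _
      have hinj : Set.InjOn (Prod.snd : α × β → β) ↑(F.filter (fun p => p.1 = a)) := by
        intro p hp q hq h
        simp only [Finset.coe_filter, Set.mem_setOf_eq] at hp hq
        exact Prod.ext (hp.2.trans hq.2.symm) h
      rw [← Finset.card_image_of_injOn hinj]
      apply indep_le
      intro v hv w hw hvw
      obtain ⟨p, hp, rfl⟩ := Finset.mem_image.mp hv
      obtain ⟨q, hq, rfl⟩ := Finset.mem_image.mp hw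
      rw [Finset.mem_filter] at hp hq
      exact hF p hp.1 q hq.1 (Or.inr ⟨hp.2.trans hq.2.symm, hvw⟩)
    calc ∑ a ∈ F.image Prod.fst, (F.filter (fun p => p.1 = a)).card
        ≤ ∑ _a ∈ F.image Prod.fst, indepNum H := Finset.sum_le_sum hfib
      _ = (F.image Prod.fst).card * indepNum H := by rw [Finset.sum_const, smul_eq_mul]
      _ ≤ indepNum G * indepNum H :=
          Nat.mul_le_mul_right _ (indep_le G _ himg)
  · -- lower bound
    rw [← hAcard, ← hBcard, ← Finset.card_product]
    apply indep_le
    rintro ⟨a, b⟩ hab ⟨c, d⟩ hcd h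
    rw [Finset.mem_product] at hab hcd
    rcases h with h | ⟨h1, h2⟩
    · exact hA a hab.1 c hcd.1 h
    · exact hB b hab.2 d hcd.2 h2
end

section
/- Let G and H be finite simple graphs, and let F and F' be independent sets of the lexicographical product G[H] such that π₁(F) and π₁(F') are maximal independent sets of G with π₁(F) ≠ π₁(F'). Then |F ∩ F'| ≤ (α(G) − 1)·α(H). In particular, if α(H) ≥ 2 and |F'| = α(G)·α(H), then |F ∩ F'| < |F'| − 1. -/
open Finset

variable {V : Type*}

lemma card_le_indepNum' {V : Type*} [Fintype V] (G : SimpleGraph V)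
    {S : Finset V} (hS : S ∈ indComplex G) : S.card ≤ indepNum G := by
  apply le_csSup
  · refine ⟨Fintype.card V, ?_⟩
    rintro n ⟨T, _, rfl⟩
    exact T.card_le_univ.trans_eq card_univ
  · exact ⟨S, hS, rfl⟩

theorem stmt10 {α β : Type*} [Fintype α] [Fintype β] [DecidableEq α] [DecidableEq β]
    (G : SimpleGraph α) (H : SimpleGraph β)
    (F F' : Finset (α × β))
    (hF : F ∈ indComplex (lexProd G H)) (hF' : F' ∈ indComplex (lexProd G H))
    (h1 : IsFacet (indComplex G) (F.image Prod.fst))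
    (h2 : IsFacet (indComplex G) (F'.image Prod.fst))
    (hne : F.image Prod.fst ≠ F'.image Prod.fst) :
    (F ∩ F').card ≤ (indepNum G - 1) * indepNum H ∧
      (2 ≤ indepNum H → F'.card = indepNum G * indepNum H →
        (F ∩ F').card < F'.card - 1) := by
  classical
  set I := F ∩ F' with hIdef
  have hI : I ∈ indComplex (lexProd G H) := fun v hv w hw =>
    hF v (mem_of_mem_inter_left hv) w (mem_of_mem_inter_left hw)
  have himg : I.image Prod.fst ⊆ (F.image Prod.fst) ∩ (F'.image Prod.fst) := by
    intro a ha
    simp only [mem_image] at ha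
    obtain ⟨p, hp, rfl⟩ := ha
    rw [mem_inter]
    exact ⟨mem_image_of_mem _ (mem_of_mem_inter_left hp),
      mem_image_of_mem _ (mem_of_mem_inter_right hp)⟩
  have hssub : (F.image Prod.fst) ∩ (F'.image Prod.fst) ⊂ F.image Prod.fst := by
    refine ⟨inter_subset_left, fun hsub => ?_⟩
    exact hne (h1.2 _ h2.1 (fun a ha => (mem_inter.mp (hsub ha)).2))
  have hcard1 : (I.image Prod.fst).card < (F.image Prod.fst).card :=
    lt_of_le_of_lt (card_le_card himg) (card_lt_card hssub)
  have hFG : (F.image Prod.fst).card ≤ indepNum G := card_le_indepNum' G h1.1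
  have hfib : ∀ a ∈ I.image Prod.fst, (I.filter fun p => p.1 = a).card ≤ indepNum H := by
    intro a _
    have heq : (I.filter fun p => p.1 = a).card
        = ((I.filter fun p => p.1 = a).image Prod.snd).card := by
      rw [card_image_of_injOn]
      intro p hp q hq h
      simp only [coe_filter, Set.mem_setOf_eq] at hp hq
      exact Prod.ext (hp.2.trans hq.2.symm) h
    rw [heq]
    apply card_le_indepNum' H
    intro v hv w hw
    simp only [mem_image, mem_filter] at hv hw
    obtain ⟨p, ⟨hp, hpa⟩, rfl⟩ := hv
    obtain ⟨q, ⟨hq, hqa⟩, rfl⟩ := hw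
    intro hadj
    exact hI p hp q hq (Or.inr ⟨hpa.trans hqa.symm, hadj⟩)
  have hmain : I.card ≤ indepNum H * (I.image Prod.fst).card :=
    card_le_mul_card_image _ _ hfib
  have hbound : I.card ≤ (indepNum G - 1) * indepNum H := by
    calc I.card ≤ indepNum H * (I.image Prod.fst).card := hmain
    _ ≤ indepNum H * (indepNum G - 1) := Nat.mul_le_mul_left _ (by omega)
    _ = (indepNum G - 1) * indepNum H := Nat.mul_comm _ _
  refine ⟨hbound, fun hH hF'card => ?_⟩
  have hGpos : 1 ≤ indepNum G := by omega
  have hsub : (indepNum G - 1) * indepNum H = indepNum G * indepNum H - indepNum H :=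
    Nat.sub_one_mul _ _
  have hle : indepNum H ≤ indepNum G * indepNum H :=
    Nat.le_mul_of_pos_left _ hGpos
  omega
end

section
/- Let G be a finite simple graph on vertices x_1, …, x_n and let (s_1, …, s_n) be an n-tuple of positive integers. Then the independence complex Ind(G) is vertex decomposable if and only if the independence complex of the expansion G^{(s_1,…,s_n)} is vertex decomposable. -/
open Finset

variable {V : Type*}

namespace ExpAux

variable {α β : Type*} [DecidableEq α] [DecidableEq β] (π : β → α)

/-- Expansion of a complex `Δ` along `π`, restricted to the vertex set `A`. -/
def exp (Δ : Set (Finset α)) (A : Finset β) : Set (Finset β) :=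
  {F | F ⊆ A ∧ Set.InjOn π ↑F ∧ F.image π ∈ Δ}

/-- Downward closedness. -/
def Down (Δ : Set (Finset α)) : Prop := ∀ F ∈ Δ, ∀ G, G ⊆ F → G ∈ Δ

/-- Every vertex of every face of `Δ` has a copy in `A`. -/
def Inv (Δ : Set (Finset α)) (A : Finset β) : Prop :=
  ∀ F ∈ Δ, ∀ v ∈ F, ∃ p ∈ A, π p = v

variable {π}

lemma down_del {Δ : Set (Finset α)} (h : Down Δ) (x : α) : Down (del Δ x) := by
  rintro F ⟨hF, hx⟩ G hG
  exact ⟨h F hF G hG, fun hxG => hx (hG hxG)⟩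

lemma down_link {Δ : Set (Finset α)} (h : Down Δ) (x : α) : Down (link Δ x) := by
  rintro F ⟨hF, hx, hins⟩ G hG
  exact ⟨h F hF G hG, fun hxG => hx (hG hxG),
    h _ hins _ (Finset.insert_subset_insert x hG)⟩

lemma del_subset (Δ : Set (Finset α)) (x : α) : del Δ x ⊆ Δ := fun _ h => h.1

lemma link_subset (Δ : Set (Finset α)) (x : α) : link Δ x ⊆ Δ := fun _ h => h.1

lemma inv_mono {Δ Δ' : Set (Finset α)} {A : Finset β} (hsub : Δ' ⊆ Δ)
    (h : Inv π Δ A) : Inv π Δ' A := fun F hF => h F (hsub hF)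

lemma del_exp (Δ : Set (Finset α)) (A : Finset β) (p : β) :
    del (exp π Δ A) p = exp π Δ (A.erase p) := by
  ext F
  constructor
  · rintro ⟨⟨h1, h2, h3⟩, hp⟩
    exact ⟨fun q hq => Finset.mem_erase.2 ⟨fun h => hp (h ▸ hq), h1 hq⟩, h2, h3⟩
  · rintro ⟨h1, h2, h3⟩
    refine ⟨⟨fun q hq => Finset.mem_of_mem_erase (h1 hq), h2, h3⟩, fun hp => ?_⟩
    exact (Finset.mem_erase.1 (h1 hp)).1 rfl

lemma link_exp {Δ : Set (Finset α)} {A : Finset β} {p : β} (hp : p ∈ A) (hd : Down Δ) :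
    link (exp π Δ A) p = exp π (link Δ (π p)) A := by
  ext F
  constructor
  · rintro ⟨⟨h1, h2, h3⟩, hpF, hiA, hiinj, hiΔ⟩
    have hx : π p ∉ F.image π := by
      intro hmem
      obtain ⟨q, hq, hqp⟩ := Finset.mem_image.1 hmem
      have : q = p := hiinj (by simp [hq]) (by simp) hqp
      exact hpF (this ▸ hq)
    rw [Finset.image_insert] at hiΔ
    exact ⟨h1, h2, h3, hx, hiΔ⟩
  · rintro ⟨h1, h2, h3, hx, hins⟩
    have hpF : p ∉ F := fun hpF => hx (Finset.mem_image_of_mem π hpF)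
    refine ⟨⟨h1, h2, h3⟩, hpF, ?_, ?_, ?_⟩
    · exact Finset.insert_subset hp h1
    · intro a ha b hb hab
      rw [Finset.coe_insert] at ha hb
      rcases ha with rfl | ha
      · rcases hb with rfl | hb
        · rfl
        · exact absurd (hab ▸ Finset.mem_image_of_mem π hb) hx
      · rcases hb with rfl | hb
        · exact absurd (hab ▸ Finset.mem_image_of_mem π ha) hx
        · exact h2 ha hb hab
    · rw [Finset.image_insert]; exact hins

lemma exp_del_eq {Δ : Set (Finset α)} {A : Finset β} {x : α}
    (h : ∀ q ∈ A, π q ≠ x) : exp π Δ A = exp π (del Δ x) A := by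
  ext F
  constructor
  · rintro ⟨h1, h2, h3⟩
    refine ⟨h1, h2, h3, fun hx => ?_⟩
    obtain ⟨q, hq, hqx⟩ := Finset.mem_image.1 hx
    exact h q (h1 hq) hqx
  · rintro ⟨h1, h2, h3, _⟩
    exact ⟨h1, h2, h3⟩

lemma lift (A : Finset β) (H : Finset α) (hcop : ∀ v ∈ H, ∃ p ∈ A, π p = v) :
    ∃ F : Finset β, F ⊆ A ∧ Set.InjOn π ↑F ∧ F.image π = H := by
  classical
  induction H using Finset.induction_on with
  | empty => exact ⟨∅, by simp, by simp [Set.InjOn], by simp⟩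
  | @insert v H hv ih =>
    obtain ⟨F, h1, h2, h3⟩ := ih (fun w hw => hcop w (Finset.mem_insert_of_mem hw))
    obtain ⟨p, hpA, hpv⟩ := hcop v (Finset.mem_insert_self v H)
    have hpF : π p ∉ F.image π := by rw [h3, hpv]; exact hv
    refine ⟨insert p F, Finset.insert_subset hpA h1, ?_, ?_⟩
    · intro a ha b hb hab
      rw [Finset.coe_insert] at ha hb
      rcases ha with rfl | ha
      · rcases hb with rfl | hb
        · rfl
        · exact absurd (hab ▸ Finset.mem_image_of_mem π hb) hpF
      · rcases hb with rfl | hb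
        · exact absurd (hab ▸ Finset.mem_image_of_mem π ha) hpF
        · exact h2 ha hb hab
    · rw [Finset.image_insert, h3, hpv]

lemma facet_lift {Δ : Set (Finset α)} {A : Finset β} {H : Finset α} {F : Finset β}
    (hH : IsFacet Δ H) (h1 : F ⊆ A) (h2 : Set.InjOn π ↑F) (h3 : F.image π = H) :
    IsFacet (exp π Δ A) F := by
  refine ⟨⟨h1, h2, h3 ▸ hH.1⟩, ?_⟩
  rintro G ⟨g1, g2, g3⟩ hFG
  refine Finset.Subset.antisymm hFG fun q hq => ?_
  have himg : H = G.image π := by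
    refine hH.2 _ g3 ?_
    rw [← h3]; exact Finset.image_subset_image hFG
  have : π q ∈ F.image π := by rw [h3, himg]; exact Finset.mem_image_of_mem π hq
  obtain ⟨r, hr, hrq⟩ := Finset.mem_image.1 this
  have : r = q := g2 (hFG hr) hq hrq
  exact this ▸ hr

lemma facet_proj {Δ : Set (Finset α)} {A : Finset β} {F : Finset β}
    (hd : Down Δ) (hinv : Inv π Δ A) (hF : IsFacet (exp π Δ A) F) :
    IsFacet Δ (F.image π) := by
  obtain ⟨⟨h1, h2, h3⟩, hmax⟩ := hF
  refine ⟨h3, fun G hG hsub => ?_⟩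
  by_contra hne
  obtain ⟨h, hhG, hhF⟩ := Finset.exists_of_ssubset (lt_of_le_of_ne hsub hne)
  obtain ⟨q, hqA, hqh⟩ := hinv G hG h hhG
  have hqF : q ∉ F := fun hqF => hhF (hqh ▸ Finset.mem_image_of_mem π hqF)
  have hmem : insert q F ∈ exp π Δ A := by
    refine ⟨Finset.insert_subset hqA h1, ?_, ?_⟩
    · intro a ha b hb hab
      rw [Finset.coe_insert] at ha hb
      have hne' : π q ∉ F.image π := hqh ▸ hhF
      rcases ha with rfl | ha
      · rcases hb with rfl | hb
        · rfl
        · exact absurd (hab ▸ Finset.mem_image_of_mem π hb) hne'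
      · rcases hb with rfl | hb
        · exact absurd (hab ▸ Finset.mem_image_of_mem π ha) hne'
        · exact h2 ha hb hab
    · rw [Finset.image_insert, hqh]
      exact hd G hG _ (Finset.insert_subset hhG hsub)
  have := hmax _ hmem (Finset.subset_insert q F)
  exact hqF (this ▸ Finset.mem_insert_self q F)

lemma pure_exp {Δ : Set (Finset α)} {A : Finset β}
    (hd : Down Δ) (hinv : Inv π Δ A) (hpure : IsPure Δ) : IsPure (exp π Δ A) := by
  intro F G hF hG
  have h1 := facet_proj hd hinv hF
  have h2 := facet_proj hd hinv hG
  have := hpure _ _ h1 h2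
  rwa [Finset.card_image_of_injOn hF.1.2.1, Finset.card_image_of_injOn hG.1.2.1] at this

lemma pure_of_pure_exp {Δ : Set (Finset α)} {A : Finset β}
    (hinv : Inv π Δ A) (hp : IsPure (exp π Δ A)) : IsPure Δ := by
  intro H H' hH hH'
  obtain ⟨F, f1, f2, f3⟩ := lift A H (fun v hv => hinv H hH.1 v hv)
  obtain ⟨F', g1, g2, g3⟩ := lift A H' (fun v hv => hinv H' hH'.1 v hv)
  have := hp F F' (facet_lift hH f1 f2 f3) (facet_lift hH' g1 g2 g3)
  rw [← f3, ← g3, Finset.card_image_of_injOn f2, Finset.card_image_of_injOn g2]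
  exact this

lemma vd_nonempty {γ : Type*} [DecidableEq γ] {Δ : Set (Finset γ)}
    (h : VertexDecomposable Δ) : ∃ F, F ∈ Δ := by
  induction h with
  | simplex Δ h => obtain ⟨F, hF, _⟩ := h; exact ⟨F, hF.1⟩
  | step Δ x hdp hlp hd hl ihd ihl => obtain ⟨F, hF⟩ := ihd; exact ⟨F, hF.1⟩

lemma card_le_of_inv {Δ : Set (Finset α)} {A : Finset β} (hinv : Inv π Δ A)
    {F : Finset α} (hF : F ∈ Δ) : F.card ≤ A.card := by
  obtain ⟨F', h1, h2, h3⟩ := lift A F (fun v hv => hinv F hF v hv)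
  calc F.card = F'.card := by rw [← h3, Finset.card_image_of_injOn h2]
    _ ≤ A.card := Finset.card_le_card h1

lemma exists_facet_above {Δ : Set (Finset α)} {A : Finset β} (hinv : Inv π Δ A) :
    ∀ F ∈ Δ, ∃ G, IsFacet Δ G ∧ F ⊆ G := by
  suffices H : ∀ k, ∀ F ∈ Δ, A.card - F.card ≤ k → ∃ G, IsFacet Δ G ∧ F ⊆ G by
    exact fun F hF => H A.card F hF (by omega)
  intro k
  induction k with
  | zero =>
    intro F hF hk
    refine ⟨F, ⟨hF, fun G hG hFG => ?_⟩, Finset.Subset.refl F⟩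
    by_contra hne
    have h1 := Finset.card_lt_card (lt_of_le_of_ne hFG hne)
    have h2 := card_le_of_inv hinv hG
    have h3 := card_le_of_inv hinv hF
    omega
  | succ k ihk =>
    intro F hF hk
    by_cases hmax : ∀ G ∈ Δ, F ⊆ G → F = G
    · exact ⟨F, ⟨hF, hmax⟩, Finset.Subset.refl F⟩
    · push_neg at hmax
      obtain ⟨G, hG, hFG, hne⟩ := hmax
      have hc := Finset.card_lt_card (lt_of_le_of_ne hFG hne)
      have h2 := card_le_of_inv hinv hG
      obtain ⟨G', hG', hGG'⟩ := ihk G hG (by omega)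
      exact ⟨G', hG', hFG.trans hGG'⟩

end ExpAux

namespace ExpAux

variable {α β : Type*} [DecidableEq α] [DecidableEq β] {π : β → α}

lemma down_pow (M : Finset α) : Down {F : Finset α | F ⊆ M} :=
  fun F hF G hG => hG.trans hF

lemma facet_pow {M F : Finset α} : IsFacet {F : Finset α | F ⊆ M} F ↔ F = M := by
  constructor
  · intro h; exact h.2 M (Finset.Subset.refl M) h.1
  · rintro rfl; exact ⟨Finset.Subset.refl _, fun G hG hMG => Finset.Subset.antisymm hMG hG⟩

lemma pure_pow (M : Finset α) : IsPure {F : Finset α | F ⊆ M} := by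
  intro F G hF hG
  rw [facet_pow.1 hF, facet_pow.1 hG]

lemma link_pow {M : Finset α} {x : α} (hx : x ∈ M) :
    link {F : Finset α | F ⊆ M} x = {F : Finset α | F ⊆ M.erase x} := by
  ext F
  constructor
  · rintro ⟨h1, h2, h3⟩
    exact Finset.subset_erase.2 ⟨h1, h2⟩
  · intro h
    obtain ⟨h1, h2⟩ := Finset.subset_erase.1 h
    exact ⟨h1, h2, Finset.insert_subset hx h1⟩

lemma pure_of_unique {γ : Type*} {Δ : Set (Finset γ)} (h : ∃! F, IsFacet Δ F) :
    IsPure Δ := by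
  obtain ⟨F, _, huniq⟩ := h
  intro G G' hG hG'
  rw [huniq G hG, huniq G' hG']

/-- The simplex case when each vertex of `M` has exactly one copy in `A`. -/
lemma unique_facet_exp_pow {M : Finset α} {A : Finset β}
    (hcop : ∀ v ∈ M, ∃ p ∈ A, π p = v)
    (hone : ∀ p ∈ A, ∀ q ∈ A, π p = π q → π p ∈ M → p = q) :
    ∃! F, IsFacet (exp π {F : Finset α | F ⊆ M} A) F := by
  classical
  set Fs : Finset β := A.filter (fun p => π p ∈ M) with hFs
  have hmemFs : ∀ p, p ∈ Fs ↔ p ∈ A ∧ π p ∈ M := fun p => Finset.mem_filter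
  have hFsexp : Fs ∈ exp π {F : Finset α | F ⊆ M} A := by
    refine ⟨Finset.filter_subset _ _, ?_, ?_⟩
    · intro a ha b hb hab
      rw [Finset.mem_coe, hmemFs] at ha hb
      exact hone a ha.1 b hb.1 hab ha.2
    · intro v hv
      obtain ⟨p, hp, hpv⟩ := Finset.mem_image.1 hv
      exact hpv ▸ ((hmemFs p).1 hp).2
  have hsub : ∀ G ∈ exp π {F : Finset α | F ⊆ M} A, G ⊆ Fs := by
    rintro G ⟨g1, g2, g3⟩ q hq
    exact (hmemFs q).2 ⟨g1 hq, g3 (Finset.mem_image_of_mem π hq)⟩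
  have hfacet : IsFacet (exp π {F : Finset α | F ⊆ M} A) Fs :=
    ⟨hFsexp, fun G hG hFG => Finset.Subset.antisymm hFG (hsub G hG)⟩
  exact ⟨Fs, hfacet, fun G hG => hG.2 Fs hFsexp (hsub G hG.1)⟩

/-- Pure + VD for expansions of full simplices (powersets). -/
lemma vd_exp_pow : ∀ n (M : Finset α) (A : Finset β), M.card + A.card ≤ n →
    (∀ v ∈ M, ∃ p ∈ A, π p = v) →
    IsPure (exp π {F : Finset α | F ⊆ M} A) ∧
      VertexDecomposable (exp π {F : Finset α | F ⊆ M} A) := by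
  intro n
  induction n with
  | zero =>
    intro M A hn hcop
    have huf := unique_facet_exp_pow hcop (fun p hp => by
      have : A.card = 0 := by omega
      simp [Finset.card_eq_zero.1 this] at hp)
    exact ⟨pure_of_unique huf, VertexDecomposable.simplex _ huf⟩
  | succ n ih =>
    intro M A hn hcop
    by_cases htwo : ∃ p ∈ A, ∃ q ∈ A, p ≠ q ∧ π p = π q ∧ π p ∈ M
    · obtain ⟨p, hpA, q, hqA, hpq, hπ, hM⟩ := htwo
      have hinv : Inv π {F : Finset α | F ⊆ M} A := by
        intro F hF v hv; exact hcop v (hF hv)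
      -- deletion
      have hcop' : ∀ v ∈ M, ∃ r ∈ A.erase p, π r = v := by
        intro v hv
        obtain ⟨r, hrA, hrv⟩ := hcop v hv
        by_cases hrp : r = p
        · exact ⟨q, Finset.mem_erase.2 ⟨fun h => hpq h.symm, hqA⟩, by rw [← hπ, ← hrp, hrv]⟩
        · exact ⟨r, Finset.mem_erase.2 ⟨hrp, hrA⟩, hrv⟩
      have hAcard : (A.erase p).card = A.card - 1 := Finset.card_erase_of_mem hpA
      have hAp : 1 ≤ A.card := Finset.card_pos.2 ⟨p, hpA⟩
      have hdel := ih M (A.erase p) (by omega) hcop'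
      -- link
      have hMcard : 1 ≤ M.card := Finset.card_pos.2 ⟨π p, hM⟩
      have hMe : (M.erase (π p)).card = M.card - 1 := Finset.card_erase_of_mem hM
      have hlink := ih (M.erase (π p)) A (by omega)
        (fun v hv => hcop v (Finset.mem_of_mem_erase hv))
      have eqdel : del (exp π {F : Finset α | F ⊆ M} A) p
          = exp π {F : Finset α | F ⊆ M} (A.erase p) := del_exp _ _ _
      have eqlink : link (exp π {F : Finset α | F ⊆ M} A) p
          = exp π {F : Finset α | F ⊆ M.erase (π p)} A := by
        rw [link_exp hpA (down_pow M), link_pow hM]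
      refine ⟨pure_exp (down_pow M) hinv (pure_pow M), ?_⟩
      exact VertexDecomposable.step _ p (eqdel ▸ hdel.1) (eqlink ▸ hlink.1)
        (eqdel ▸ hdel.2) (eqlink ▸ hlink.2)
    · push_neg at htwo
      have huf := unique_facet_exp_pow hcop (fun p hp q hq hpq hpM => by
        by_contra hne
        exact (htwo p hp q hq hne hpq) hpM)
      exact ⟨pure_of_unique huf, VertexDecomposable.simplex _ huf⟩

end ExpAux

namespace ExpAux

variable {α β : Type*} [DecidableEq α] [DecidableEq β] {π : β → α}

/-- Forward direction: expansions of pure vertex decomposable complexes are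
pure and vertex decomposable. -/
lemma vd_exp_main : ∀ {Δ : Set (Finset α)}, VertexDecomposable Δ → Down Δ → IsPure Δ →
    ∀ A : Finset β, Inv π Δ A →
      IsPure (exp π Δ A) ∧ VertexDecomposable (exp π Δ A) := by
  intro Δ h
  induction h with
  | simplex Δ huf =>
    intro hdown _ A hinv
    obtain ⟨M, hM, huniq⟩ := huf
    have hΔ : Δ = {F : Finset α | F ⊆ M} := by
      ext F
      constructor
      · intro hF
        obtain ⟨G, hG, hFG⟩ := exists_facet_above hinv F hF
        rw [← huniq G hG]; exact hFG
      · intro hF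
        exact hdown M hM.1 F hF
    subst hΔ
    refine vd_exp_pow (M.card + A.card) M A le_rfl ?_
    intro v hv
    exact hinv M hM.1 v hv
  | step Δ x hdp hlp hd hl ihd ihl =>
    intro hdown hpure A hinv
    obtain ⟨F₀, hF₀⟩ := vd_nonempty hl
    have hxface : insert x F₀ ∈ Δ := hF₀.2.2
    have key : ∀ n (A : Finset β), A.card ≤ n → Inv π Δ A →
        IsPure (exp π Δ A) ∧ VertexDecomposable (exp π Δ A) := by
      intro n
      induction n with
      | zero =>
        intro A hA hinvA
        obtain ⟨p, hpA, _⟩ := hinvA _ hxface x (Finset.mem_insert_self x F₀)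
        have : A.card = 0 := by omega
        simp [Finset.card_eq_zero.1 this] at hpA
      | succ n ihn =>
        intro A hA hinvA
        obtain ⟨p, hpA, hpx⟩ := hinvA _ hxface x (Finset.mem_insert_self x F₀)
        refine ⟨pure_exp hdown hinvA hpure, ?_⟩
        have eqlink : link (exp π Δ A) p = exp π (link Δ x) A := by
          rw [link_exp hpA hdown, hpx]
        have hlres := ihl (down_link hdown x) hlp A (inv_mono (link_subset Δ x) hinvA)
        have eqdel : del (exp π Δ A) p = exp π Δ (A.erase p) := del_exp _ _ _
        have hAcard : (A.erase p).card = A.card - 1 := Finset.card_erase_of_mem hpA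
        have hAp : 1 ≤ A.card := Finset.card_pos.2 ⟨p, hpA⟩
        by_cases hrem : ∃ q ∈ A.erase p, π q = x
        · obtain ⟨q, hq, hqx⟩ := hrem
          have hinv' : Inv π Δ (A.erase p) := by
            intro F hF v hv
            obtain ⟨r, hrA, hrv⟩ := hinvA F hF v hv
            by_cases hrp : r = p
            · exact ⟨q, hq, by rw [hqx, ← hrv, hrp, hpx]⟩
            · exact ⟨r, Finset.mem_erase.2 ⟨hrp, hrA⟩, hrv⟩
          have hdres := ihn (A.erase p) (by omega) hinv'
          exact VertexDecomposable.step _ p (eqdel ▸ hdres.1) (eqlink ▸ hlres.1)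
            (eqdel ▸ hdres.2) (eqlink ▸ hlres.2)
        · push_neg at hrem
          have eqdel2 : del (exp π Δ A) p = exp π (del Δ x) (A.erase p) := by
            rw [eqdel]; exact exp_del_eq hrem
          have hinv' : Inv π (del Δ x) (A.erase p) := by
            rintro F ⟨hF, hxF⟩ v hv
            obtain ⟨r, hrA, hrv⟩ := hinvA F hF v hv
            have hrp : r ≠ p := by
              intro h
              rw [h, hpx] at hrv
              exact hxF (hrv ▸ hv)
            exact ⟨r, Finset.mem_erase.2 ⟨hrp, hrA⟩, hrv⟩
          have hdres := ihd (down_del hdown x) hdp (A.erase p) hinv'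
          exact VertexDecomposable.step _ p (eqdel2 ▸ hdres.1) (eqlink ▸ hlres.1)
            (eqdel2 ▸ hdres.2) (eqlink ▸ hlres.2)
    exact key A.card A le_rfl hinv

/-- Backward direction: if the expansion is vertex decomposable, so is the base. -/
lemma vd_of_exp : ∀ {Θ : Set (Finset β)}, VertexDecomposable Θ →
    ∀ (Δ : Set (Finset α)) (A : Finset β), Θ = exp π Δ A → Down Δ → Inv π Δ A →
      VertexDecomposable Δ := by
  intro Θ h
  induction h with
  | simplex Θ huf =>
    rintro Δ A rfl hdown hinv
    obtain ⟨Fh, hFh, huniq⟩ := huf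
    refine VertexDecomposable.simplex Δ ⟨Fh.image π, facet_proj hdown hinv hFh, ?_⟩
    intro H hH
    obtain ⟨F, h1, h2, h3⟩ := lift A H (fun v hv => hinv H hH.1 v hv)
    rw [← h3, huniq F (facet_lift hH h1 h2 h3)]
  | step Θ p hdp hlp hd hl ihd ihl =>
    rintro Δ A rfl hdown hinv
    by_cases hrem : Inv π Δ (A.erase p)
    · exact ihd Δ (A.erase p) (del_exp _ _ _) hdown hrem
    · unfold Inv at hrem
      push_neg at hrem
      obtain ⟨F₁, hF₁, v, hv, hnone⟩ := hrem
      obtain ⟨r, hrA, hrv⟩ := hinv F₁ hF₁ v hv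
      have hrp : r = p := by
        by_contra hne
        exact hnone r (Finset.mem_erase.2 ⟨hne, hrA⟩) hrv
      subst hrp
      have hnox : ∀ q ∈ A.erase r, π q ≠ π r := by
        intro q hq
        rw [hrv]; exact hnone q hq
      have eqdel : del (exp π Δ A) r = exp π (del Δ (π r)) (A.erase r) := by
        rw [del_exp]; exact exp_del_eq hnox
      have eqlink : link (exp π Δ A) r = exp π (link Δ (π r)) A := link_exp hrA hdown
      have hinvd : Inv π (del Δ (π r)) (A.erase r) := by
        rintro F ⟨hF, hxF⟩ w hw
        obtain ⟨q, hqA, hqw⟩ := hinv F hF w hw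
        have hqr : q ≠ r := by
          intro h
          rw [h, hrv] at hqw
          exact hxF (by rw [hrv, hqw]; exact hw)
        exact ⟨q, Finset.mem_erase.2 ⟨hqr, hqA⟩, hqw⟩
      have hinvl : Inv π (link Δ (π r)) A := inv_mono (link_subset Δ (π r)) hinv
      have hVDdel := ihd (del Δ (π r)) (A.erase r) eqdel (down_del hdown (π r)) hinvd
      have hVDlink := ihl (link Δ (π r)) A eqlink (down_link hdown (π r)) hinvl
      rw [eqdel] at hdp
      rw [eqlink] at hlp
      exact VertexDecomposable.step Δ (π r) (pure_of_pure_exp hinvd hdp)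
        (pure_of_pure_exp hinvl hlp) hVDdel hVDlink

end ExpAux

theorem stmt13 {V : Type*} [Fintype V] [DecidableEq V] (G : SimpleGraph V)
    (s : V → ℕ) (hs : ∀ v, 1 ≤ s v) :
    (IsPure (indComplex G) ∧ VertexDecomposable (indComplex G)) ↔
      (IsPure (indComplex (expansion G s)) ∧
        VertexDecomposable (indComplex (expansion G s))) := by
  classical
  set π : (Σ v : V, Fin (s v)) → V := Sigma.fst with hπ
  have hdown : ExpAux.Down (indComplex G) := by
    intro F hF H hH
    intro v hv w hw
    exact hF v (hH hv) w (hH hw)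
  have hinv : ExpAux.Inv π (indComplex G) Finset.univ := by
    intro F _ v _
    exact ⟨⟨v, ⟨0, hs v⟩⟩, Finset.mem_univ _, rfl⟩
  have heq : ExpAux.exp π (indComplex G) Finset.univ = indComplex (expansion G s) := by
    ext F
    constructor
    · rintro ⟨_, h2, h3⟩
      intro p hp q hq hadj
      obtain ⟨hne, hor | hor⟩ := hadj
      · exact h3 p.1 (Finset.mem_image_of_mem π hp) q.1 (Finset.mem_image_of_mem π hq) hor
      · exact hne (h2 hp hq hor)
    · intro hF
      refine ⟨Finset.subset_univ F, ?_, ?_⟩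
      · intro p hp q hq hpq
        by_contra hne
        exact hF p hp q hq ⟨hne, Or.inr hpq⟩
      · intro v hv w hw hadj
        obtain ⟨p, hp, hpv⟩ := Finset.mem_image.1 hv
        obtain ⟨q, hq, hqw⟩ := Finset.mem_image.1 hw
        have hne : p ≠ q := by
          intro h
          have hvw : v = w := by rw [← hpv, h, hqw]
          exact G.irrefl (hvw ▸ hadj)
        exact hF p hp q hq ⟨hne, Or.inl (by
          show G.Adj (π p) (π q)
          rw [hpv, hqw]; exact hadj)⟩
  constructor
  · rintro ⟨hp, hvd⟩
    have := ExpAux.vd_exp_main hvd hdown hp Finset.univ hinv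
    rw [heq] at this
    exact this
  · rintro ⟨hp, hvd⟩
    rw [← heq] at hp hvd
    exact ⟨ExpAux.pure_of_pure_exp hinv hp,
      ExpAux.vd_of_exp hvd (indComplex G) Finset.univ rfl hdown hinv⟩
end

section
/- Let G = C_n(S) be a circulant graph whose independence complex is shellable, and let m ≥ 1. Then the lexicographical product G[K_m] is isomorphic to a circulant graph on nm vertices whose independence complex is shellable. Likewise, if the independence complex of G is vertex decomposable, then G[K_m] is isomorphic to a circulant graph on nm vertices whose independence complex is vertex decomposable. -/
open Finset

set_option linter.unusedSectionVars false

variable {V : Type*}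

/-! ### Auxiliary development -/

section Transfer

variable {V' W : Type*} [DecidableEq V'] [DecidableEq W]

/-- `Δ'` is the image of the complex `Δ` under the embedding `f`. -/
def Corresponds (f : V' ↪ W) (Δ : Set (Finset V')) (Δ' : Set (Finset W)) : Prop :=
  ∀ F' : Finset W, F' ∈ Δ' ↔ ∃ F ∈ Δ, F' = F.map f

theorem Corresponds.facet {f : V' ↪ W} {Δ : Set (Finset V')} {Δ' : Set (Finset W)}
    (h : Corresponds f Δ Δ') {F : Finset V'} (hF : IsFacet Δ F) : IsFacet Δ' (F.map f) := by
  refine ⟨(h _).2 ⟨F, hF.1, rfl⟩, ?_⟩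
  intro G' hG' hsub
  obtain ⟨G, hG, rfl⟩ := (h _).1 hG'
  rw [Finset.map_subset_map] at hsub
  rw [hF.2 G hG hsub]

theorem Corresponds.facet_back {f : V' ↪ W} {Δ : Set (Finset V')} {Δ' : Set (Finset W)}
    (h : Corresponds f Δ Δ') {F' : Finset W} (hF' : IsFacet Δ' F') :
    ∃ F, IsFacet Δ F ∧ F' = F.map f := by
  obtain ⟨F, hF, rfl⟩ := (h _).1 hF'.1
  refine ⟨F, ⟨hF, ?_⟩, rfl⟩
  intro G hG hFG
  have := hF'.2 (G.map f) ((h _).2 ⟨G, hG, rfl⟩) (Finset.map_subset_map.2 hFG)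
  exact Finset.map_injective f this

theorem Corresponds.pure {f : V' ↪ W} {Δ : Set (Finset V')} {Δ' : Set (Finset W)}
    (h : Corresponds f Δ Δ') (hp : IsPure Δ) : IsPure Δ' := by
  intro F' G' hF' hG'
  obtain ⟨F, hF, rfl⟩ := h.facet_back hF'
  obtain ⟨G, hG, rfl⟩ := h.facet_back hG'
  simp only [Finset.card_map]
  exact hp F G hF hG

theorem Corresponds.del {f : V' ↪ W} {Δ : Set (Finset V')} {Δ' : Set (Finset W)}
    (h : Corresponds f Δ Δ') (x : V') : Corresponds f (del Δ x) (del Δ' (f x)) := by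
  intro F'
  constructor
  · rintro ⟨hF', hx⟩
    obtain ⟨F, hF, rfl⟩ := (h _).1 hF'
    exact ⟨F, ⟨hF, fun hxF => hx (Finset.mem_map' f |>.2 hxF)⟩, rfl⟩
  · rintro ⟨F, ⟨hF, hx⟩, rfl⟩
    exact ⟨(h _).2 ⟨F, hF, rfl⟩, fun hxF => hx ((Finset.mem_map' f).1 hxF)⟩

theorem Corresponds.link {f : V' ↪ W} {Δ : Set (Finset V')} {Δ' : Set (Finset W)}
    (h : Corresponds f Δ Δ') (x : V') : Corresponds f (link Δ x) (link Δ' (f x)) := by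
  intro F'
  constructor
  · rintro ⟨hF', hx, hins⟩
    obtain ⟨F, hF, rfl⟩ := (h _).1 hF'
    refine ⟨F, ⟨hF, fun hxF => hx (Finset.mem_map' f |>.2 hxF), ?_⟩, rfl⟩
    rw [← Finset.map_insert] at hins
    obtain ⟨G, hG, hGe⟩ := (h _).1 hins
    rwa [Finset.map_injective f hGe.symm] at hG
  · rintro ⟨F, ⟨hF, hx, hins⟩, rfl⟩
    refine ⟨(h _).2 ⟨F, hF, rfl⟩, fun hxF => hx ((Finset.mem_map' f).1 hxF), ?_⟩
    rw [← Finset.map_insert]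
    exact (h _).2 ⟨insert x F, hins, rfl⟩

theorem Corresponds.vd {f : V' ↪ W} {Δ : Set (Finset V')} {Δ' : Set (Finset W)}
    (h : Corresponds f Δ Δ') (hvd : VertexDecomposable Δ) : VertexDecomposable Δ' := by
  induction hvd generalizing Δ' with
  | simplex Δ hex =>
    obtain ⟨F, hF, huniq⟩ := hex
    refine VertexDecomposable.simplex _ ⟨F.map f, h.facet hF, ?_⟩
    intro G' hG'
    obtain ⟨G, hG, rfl⟩ := h.facet_back hG'
    rw [huniq G hG]
  | step Δ x hdp hlp hd hl ihd ihl =>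
    exact VertexDecomposable.step _ (f x) ((h.del x).pure hdp) ((h.link x).pure hlp)
      (ihd (h.del x)) (ihl (h.link x))

theorem Corresponds.shellable {f : V' ↪ W} {Δ : Set (Finset V')} {Δ' : Set (Finset W)}
    (h : Corresponds f Δ Δ') (hs : Shellable Δ) : Shellable Δ' := by
  obtain ⟨hp, s, F, hall, hsurj, hinj, hshell⟩ := hs
  refine ⟨h.pure hp, s, fun i => (F i).map f, fun i => h.facet (hall i), ?_, ?_, ?_⟩
  · intro G' hG'
    obtain ⟨G, hG, rfl⟩ := h.facet_back hG'
    obtain ⟨i, hi⟩ := hsurj G hG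
    exact ⟨i, congrArg (Finset.map f) hi⟩
  · intro i j hij
    exact hinj (Finset.map_injective f hij)
  · intro i j hij
    obtain ⟨x, hx, k, hk, hdiff⟩ := hshell i j hij
    refine ⟨f x, ?_, k, hk, ?_⟩
    · simp only [Finset.map_eq_image, ← Finset.image_sdiff _ _ f.injective]
      exact Finset.mem_image_of_mem f hx
    · simp only [Finset.map_eq_image, ← Finset.image_sdiff _ _ f.injective, hdiff,
        Finset.image_singleton]

end Transfer

section ExpC

variable {V : Type*} [DecidableEq V]

/-- The expansion of a complex `Δ`, where each vertex `v` gets `s v` copies. -/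
def ExpC (s : V → ℕ) (Δ : Set (Finset V)) : Set (Finset (Σ v : V, Fin (s v))) :=
  {F | (∀ p ∈ F, ∀ q ∈ F, p.1 = q.1 → p = q) ∧ F.image Sigma.fst ∈ Δ}

/-- A complex is downward closed. -/
def DownClosed (Δ : Set (Finset V)) : Prop := ∀ F ∈ Δ, ∀ G ⊆ F, G ∈ Δ

/-- Vertices with no copies do not occur in `Δ`. -/
def Adequate (s : V → ℕ) (Δ : Set (Finset V)) : Prop := ∀ v, s v = 0 → ∀ F ∈ Δ, v ∉ F

theorem mem_expC {s : V → ℕ} {Δ : Set (Finset V)} {F : Finset (Σ v : V, Fin (s v))} :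
    F ∈ ExpC s Δ ↔ (∀ p ∈ F, ∀ q ∈ F, p.1 = q.1 → p = q) ∧ F.image Sigma.fst ∈ Δ :=
  Iff.rfl

theorem expC_down {s : V → ℕ} {Δ : Set (Finset V)} (hdc : DownClosed Δ) :
    DownClosed (ExpC s Δ) := by
  rintro F ⟨hinj, himg⟩ G hG
  exact ⟨fun p hp q hq => hinj p (hG hp) q (hG hq),
    hdc _ himg _ (Finset.image_subset_image hG)⟩

theorem expC_facet_iff {s : V → ℕ} {Δ : Set (Finset V)} (hdc : DownClosed Δ)
    (had : Adequate s Δ) {M : Finset (Σ v : V, Fin (s v))} :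
    IsFacet (ExpC s Δ) M ↔ M ∈ ExpC s Δ ∧ IsFacet Δ (M.image Sigma.fst) := by
  constructor
  · intro hM
    refine ⟨hM.1, hM.1.2, ?_⟩
    intro J hJ hsub
    refine Finset.Subset.antisymm hsub ?_
    intro v hvJ
    by_contra hv
    have hs : 0 < s v := by
      rcases Nat.eq_zero_or_pos (s v) with h0 | h0
      · exact absurd hvJ (had v h0 J hJ)
      · exact h0
    set p : Σ v : V, Fin (s v) := ⟨v, ⟨0, hs⟩⟩ with hp
    have hM' : insert p M ∈ ExpC s Δ := by
      constructor
      · intro a ha b hb hab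
        rcases Finset.mem_insert.1 ha with rfl | ha <;>
          rcases Finset.mem_insert.1 hb with rfl | hb
        · rfl
        · have hb' : b.fst = v := hab.symm
          exact absurd (hb' ▸ Finset.mem_image_of_mem Sigma.fst hb) hv
        · have ha' : a.fst = v := hab
          exact absurd (ha' ▸ Finset.mem_image_of_mem Sigma.fst ha) hv
        · exact hM.1.1 a ha b hb hab
      · rw [Finset.image_insert]
        exact hdc J hJ _ (Finset.insert_subset hvJ hsub)
    have heq := hM.2 _ hM' (Finset.subset_insert _ _)
    have : p ∈ M := heq ▸ Finset.mem_insert_self p M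
    exact hv (Finset.mem_image_of_mem Sigma.fst this)
  · rintro ⟨hM, hfac⟩
    refine ⟨hM, ?_⟩
    intro G hG hsub
    refine Finset.Subset.antisymm hsub ?_
    intro q hq
    have himg : M.image Sigma.fst = G.image Sigma.fst :=
      hfac.2 _ hG.2 (Finset.image_subset_image hsub)
    have : q.1 ∈ M.image Sigma.fst := himg ▸ Finset.mem_image_of_mem Sigma.fst hq
    obtain ⟨p, hp, hp1⟩ := Finset.mem_image.1 this
    have := hG.1 p (hsub hp) q hq hp1
    exact this ▸ hp

theorem expC_pure {s : V → ℕ} {Δ : Set (Finset V)} (hdc : DownClosed Δ)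
    (had : Adequate s Δ) (hp : IsPure Δ) : IsPure (ExpC s Δ) := by
  intro M N hM hN
  rw [expC_facet_iff hdc had] at hM hN
  have cM : M.card = (M.image Sigma.fst).card :=
    (Finset.card_image_of_injOn fun p hp q hq => hM.1.1 p hp q hq).symm
  have cN : N.card = (N.image Sigma.fst).card :=
    (Finset.card_image_of_injOn fun p hp q hq => hN.1.1 p hp q hq).symm
  rw [cM, cN]
  exact hp _ _ hM.2 hN.2

theorem link_expC {s : V → ℕ} {Δ : Set (Finset V)} (hdc : DownClosed Δ) (x : V)
    (j : Fin (s x)) : link (ExpC s Δ) ⟨x, j⟩ = ExpC s (link Δ x) := by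
  ext F
  constructor
  · rintro ⟨⟨hinj, himg⟩, hp, hins⟩
    have hxim : x ∉ F.image Sigma.fst := by
      intro hx
      obtain ⟨q, hq, hq1⟩ := Finset.mem_image.1 hx
      have : q = ⟨x, j⟩ := hins.1 q (Finset.mem_insert_of_mem hq) ⟨x, j⟩
        (Finset.mem_insert_self _ _) hq1
      exact hp (this ▸ hq)
    refine ⟨hinj, himg, hxim, ?_⟩
    have himage : (insert (⟨x, j⟩ : Σ v : V, Fin (s v)) F).image Sigma.fst
        = insert x (F.image Sigma.fst) := Finset.image_insert _ _ _
    rw [← himage]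
    exact hins.2
  · rintro ⟨hinj, hΔi, hxi, hinsi⟩
    have hp : (⟨x, j⟩ : Σ v : V, Fin (s v)) ∉ F :=
      fun h => hxi (Finset.mem_image_of_mem _ h)
    refine ⟨⟨hinj, hΔi⟩, hp, ?_, ?_⟩
    · intro a ha b hb hab
      rcases Finset.mem_insert.1 ha with rfl | ha <;>
        rcases Finset.mem_insert.1 hb with rfl | hb
      · rfl
      · have hb' : b.fst = x := hab.symm
        exact absurd (hb' ▸ Finset.mem_image_of_mem Sigma.fst hb) hxi
      · have ha' : a.fst = x := hab
        exact absurd (ha' ▸ Finset.mem_image_of_mem Sigma.fst ha) hxi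
      · exact hinj a ha b hb hab
    · rw [Finset.image_insert]
      exact hinsi

theorem del_expC_of_one {s : V → ℕ} {Δ : Set (Finset V)} {x : V} (hx1 : s x = 1)
    (j : Fin (s x)) : del (ExpC s Δ) ⟨x, j⟩ = ExpC s (del Δ x) := by
  ext F
  constructor
  · rintro ⟨⟨hinj, himg⟩, hp⟩
    refine ⟨hinj, himg, ?_⟩
    intro hx
    obtain ⟨q, hq, hq1⟩ := Finset.mem_image.1 hx
    obtain ⟨v, jq⟩ := q
    have hq1' : v = x := hq1
    subst hq1'
    have hval : (⟨v, jq⟩ : Σ v : V, Fin (s v)) = ⟨v, j⟩ := by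
      have h1 := jq.isLt
      have h2 := j.isLt
      exact congrArg (Sigma.mk v) (Fin.ext (by omega))
    exact hp (hval ▸ hq)
  · rintro ⟨hinj, himg, hximg⟩
    exact ⟨⟨hinj, himg⟩, fun h => hximg (Finset.mem_image_of_mem _ h)⟩

theorem update_le (s : V → ℕ) (x : V) (v : V) :
    Function.update s x (s x - 1) v ≤ s v := by
  by_cases h : v = x
  · subst h; simp only [Function.update_self]; omega
  · simp only [Function.update_of_ne h]; exact le_refl _

/-- The embedding of the sigma type with one fewer copy of `x` into the full sigma type. -/
def shrinkEmb (s : V → ℕ) (x : V) :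
    (Σ v : V, Fin (Function.update s x (s x - 1) v)) ↪ (Σ v : V, Fin (s v)) where
  toFun p := ⟨p.1, ⟨p.2.val, lt_of_lt_of_le p.2.isLt (update_le s x p.1)⟩⟩
  inj' := by
    rintro ⟨v, j⟩ ⟨w, k⟩ h
    have hvw : v = w := congrArg Sigma.fst h
    subst hvw
    have hval : j.val = k.val :=
      congrArg (fun q : (Σ u : V, Fin (s u)) => q.2.val) h
    have : j = k := Fin.ext hval
    rw [this]

theorem shrinkEmb_fst (s : V → ℕ) (x : V) (p : Σ v : V, Fin (Function.update s x (s x - 1) v)) :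
    (shrinkEmb s x p).1 = p.1 := rfl

theorem del_expC_corr {s : V → ℕ} {Δ : Set (Finset V)} (x : V) (hx2 : 2 ≤ s x) :
    Corresponds (shrinkEmb s x) (ExpC (Function.update s x (s x - 1)) Δ)
      (del (ExpC s Δ) ⟨x, (⟨s x - 1, by omega⟩ : Fin (s x))⟩) := by
  intro F'
  constructor
  · rintro ⟨⟨hinj, himg⟩, hp⟩
    -- every element of F' is in the range of the embedding
    have hbound : ∀ q ∈ F', q.2.val < Function.update s x (s x - 1) q.1 := by
      rintro ⟨v, jv⟩ hq
      by_cases hvx : v = x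
      · subst hvx
        simp only [Function.update_self]
        have h1 := jv.isLt
        rcases Nat.lt_or_ge jv.val (s v - 1) with h | h
        · exact h
        · exfalso
          have : jv = ⟨s v - 1, by omega⟩ := Fin.ext (by show jv.val = s v - 1; omega)
          exact hp (this ▸ hq)
      · simpa only [Function.update_of_ne hvx] using jv.isLt
    set lower : {q // q ∈ F'} → (Σ v : V, Fin (Function.update s x (s x - 1) v)) :=
      fun q => ⟨q.1.1, ⟨q.1.2.val, hbound q.1 q.2⟩⟩ with hlower
    have hemb : ∀ q : {q // q ∈ F'}, shrinkEmb s x (lower q) = q.1 := by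
      rintro ⟨⟨v, jv⟩, hq⟩
      exact congrArg (Sigma.mk v) (Fin.ext rfl)
    refine ⟨F'.attach.image lower, ⟨?_, ?_⟩, ?_⟩
    · intro a ha b hb hab
      obtain ⟨qa, _, rfl⟩ := Finset.mem_image.1 ha
      obtain ⟨qb, _, rfl⟩ := Finset.mem_image.1 hb
      have : qa.1 = qb.1 := hinj qa.1 qa.2 qb.1 qb.2 hab
      have hq : qa = qb := Subtype.ext this
      rw [hq]
    · have : (F'.attach.image lower).image Sigma.fst = F'.image Sigma.fst := by
        ext v
        simp only [Finset.mem_image, Finset.mem_attach, true_and, exists_exists_eq_and]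
        constructor
        · rintro ⟨q, rfl⟩; exact ⟨q.1, q.2, rfl⟩
        · rintro ⟨q, hq, rfl⟩; exact ⟨⟨q, hq⟩, rfl⟩
      rw [this]
      exact himg
    · ext r
      simp only [Finset.mem_map, Finset.mem_image]
      constructor
      · intro hr
        exact ⟨lower ⟨r, hr⟩, ⟨⟨⟨r, hr⟩, Finset.mem_attach _ _, rfl⟩, hemb ⟨r, hr⟩⟩⟩
      · rintro ⟨a, ⟨q, _, rfl⟩, rfl⟩
        rw [hemb q]
        exact q.2
  · rintro ⟨F, ⟨hinj, himg⟩, rfl⟩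
    refine ⟨⟨?_, ?_⟩, ?_⟩
    · intro a ha b hb hab
      obtain ⟨pa, hpa, rfl⟩ := Finset.mem_map.1 ha
      obtain ⟨pb, hpb, rfl⟩ := Finset.mem_map.1 hb
      rw [hinj pa hpa pb hpb hab]
    · have : (F.map (shrinkEmb s x)).image Sigma.fst = F.image Sigma.fst := by
        ext v
        simp only [Finset.mem_image, Finset.mem_map]
        constructor
        · rintro ⟨q, ⟨p, hp, rfl⟩, rfl⟩; exact ⟨p, hp, rfl⟩
        · rintro ⟨p, hp, rfl⟩; exact ⟨shrinkEmb s x p, ⟨p, hp, rfl⟩, rfl⟩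
      rw [this]
      exact himg
    · intro hmem
      obtain ⟨⟨v, jv⟩, hpF, hpe⟩ := Finset.mem_map.1 hmem
      have hv : v = x := congrArg Sigma.fst hpe
      subst hv
      have hval : jv.val = s v - 1 := by
        have := congrArg (fun q : (Σ v : V, Fin (s v)) => q.2.val) hpe
        exact this
      have h2 : Function.update s v (s v - 1) v = s v - 1 := by simp
      have h3 := jv.isLt
      omega

theorem adequate_mono {s : V → ℕ} {Δ Δ' : Set (Finset V)} (h : Δ' ⊆ Δ)
    (had : Adequate s Δ) : Adequate s Δ' :=
  fun v hv F hF => had v hv F (h hF)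

theorem del_subset (Δ : Set (Finset V)) (x : V) : del Δ x ⊆ Δ := fun _ h => h.1

theorem link_subset (Δ : Set (Finset V)) (x : V) : link Δ x ⊆ Δ := fun _ h => h.1

theorem del_down {Δ : Set (Finset V)} (hdc : DownClosed Δ) (x : V) :
    DownClosed (del Δ x) := by
  rintro F ⟨hF, hx⟩ G hG
  exact ⟨hdc F hF G hG, fun h => hx (hG h)⟩

theorem link_down {Δ : Set (Finset V)} (hdc : DownClosed Δ) (x : V) :
    DownClosed (link Δ x) := by
  rintro F ⟨hF, hx, hins⟩ G hG
  exact ⟨hdc F hF G hG, fun h => hx (hG h),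
    hdc _ hins _ (Finset.insert_subset_insert x hG)⟩

section FacetExtension

variable [Fintype V]

theorem exists_facet_ge {Δ : Set (Finset V)} {I : Finset V} (hI : I ∈ Δ) :
    ∃ F, IsFacet Δ F ∧ I ⊆ F := by
  have hfin : {J | J ∈ Δ ∧ I ⊆ J}.Finite := Set.toFinite _
  have hne : hfin.toFinset.Nonempty := ⟨I, by simp [hI]⟩
  obtain ⟨J, hJ, hmax⟩ := Finset.exists_max_image hfin.toFinset Finset.card hne
  simp only [Set.Finite.mem_toFinset, Set.mem_setOf_eq] at hJ
  refine ⟨J, ⟨hJ.1, ?_⟩, hJ.2⟩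
  intro K hK hJK
  have hKmem : K ∈ hfin.toFinset := by
    simp only [Set.Finite.mem_toFinset, Set.mem_setOf_eq]
    exact ⟨hK, hJ.2.trans hJK⟩
  exact Finset.eq_of_subset_of_card_le hJK (hmax K hKmem)

theorem eq_powerset_of_unique_facet {Δ : Set (Finset V)} (hdc : DownClosed Δ)
    {F₀ : Finset V} (hF₀ : IsFacet Δ F₀) (huniq : ∀ G, IsFacet Δ G → G = F₀) :
    Δ = {G : Finset V | G ⊆ F₀} := by
  ext I
  constructor
  · intro hI
    obtain ⟨F, hF, hIF⟩ := exists_facet_ge hI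
    rw [huniq F hF] at hIF
    exact hIF
  · intro hI
    exact hdc F₀ hF₀.1 I hI

end FacetExtension

theorem powerset_facet_iff {F₀ F : Finset V} :
    IsFacet {G : Finset V | G ⊆ F₀} F ↔ F = F₀ := by
  constructor
  · intro hF
    exact hF.2 F₀ (by simp [Set.mem_setOf_eq]) hF.1
  · rintro rfl
    exact ⟨by simp [Set.mem_setOf_eq], fun G hG hsub => Finset.Subset.antisymm hsub hG⟩

theorem powerset_pure (F₀ : Finset V) : IsPure {G : Finset V | G ⊆ F₀} := by
  intro F G hF hG
  rw [powerset_facet_iff.1 hF, powerset_facet_iff.1 hG]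

theorem powerset_down (F₀ : Finset V) : DownClosed {G : Finset V | G ⊆ F₀} :=
  fun F hF G hG => hG.trans hF

theorem link_powerset {F₀ : Finset V} {x : V} (hx : x ∈ F₀) :
    link {G : Finset V | G ⊆ F₀} x = {G : Finset V | G ⊆ F₀.erase x} := by
  ext I
  simp only [link, Set.mem_setOf_eq]
  constructor
  · rintro ⟨h1, h2, _⟩
    exact Finset.subset_erase.2 ⟨h1, h2⟩
  · intro h
    have h' := Finset.subset_erase.1 h
    exact ⟨h'.1, h'.2, Finset.insert_subset hx h'.1⟩

/-- The expansion of a simplex is vertex decomposable. -/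
theorem vd_expC_powerset_simplex {F₀ : Finset V} {s : V → ℕ} (hs : ∀ v ∈ F₀, s v = 1) :
    VertexDecomposable (ExpC s {G : Finset V | G ⊆ F₀}) := by
  have hdc := powerset_down F₀
  have had : Adequate s {G : Finset V | G ⊆ F₀} := by
    intro v hv F hF hvF
    have := hs v (hF hvF)
    omega
  set M₀ : Finset (Σ v : V, Fin (s v)) :=
    F₀.attach.image (fun v => ⟨v.1, ⟨0, by rw [hs v.1 v.2]; omega⟩⟩) with hM₀
  have himgM₀ : M₀.image Sigma.fst = F₀ := by
    ext v
    simp only [hM₀, Finset.mem_image, Finset.mem_attach, true_and, exists_exists_eq_and]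
    constructor
    · rintro ⟨q, rfl⟩; exact q.2
    · intro hv; exact ⟨⟨v, hv⟩, rfl⟩
  have hM₀mem : M₀ ∈ ExpC s {G : Finset V | G ⊆ F₀} := by
    constructor
    · intro a ha b hb hab
      obtain ⟨qa, _, rfl⟩ := Finset.mem_image.1 ha
      obtain ⟨qb, _, rfl⟩ := Finset.mem_image.1 hb
      have : qa = qb := Subtype.ext hab
      rw [this]
    · rw [himgM₀]; simp [Set.mem_setOf_eq]
  have hM₀facet : IsFacet (ExpC s {G : Finset V | G ⊆ F₀}) M₀ := by
    rw [expC_facet_iff hdc had]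
    exact ⟨hM₀mem, by rw [himgM₀]; exact powerset_facet_iff.2 rfl⟩
  refine VertexDecomposable.simplex _ ⟨M₀, hM₀facet, ?_⟩
  intro M hM
  rw [expC_facet_iff hdc had] at hM
  have himg : M.image Sigma.fst = F₀ := powerset_facet_iff.1 hM.2
  apply Finset.Subset.antisymm
  · rintro ⟨v, j⟩ hq
    have hv : v ∈ F₀ := himg ▸ Finset.mem_image_of_mem Sigma.fst hq
    have hj : j.val = 0 := by have := j.isLt; have := hs v hv; omega
    rw [hM₀]
    refine Finset.mem_image.2 ⟨⟨v, hv⟩, Finset.mem_attach _ _, ?_⟩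
    exact congrArg (Sigma.mk v) (Fin.ext hj.symm)
  · intro q hq
    obtain ⟨⟨v, hv⟩, _, rfl⟩ := Finset.mem_image.1 hq
    have hv' : v ∈ M.image Sigma.fst := himg.symm ▸ hv
    obtain ⟨p, hp, hp1⟩ := Finset.mem_image.1 hv'
    obtain ⟨w, jp⟩ := p
    have hwv : w = v := hp1
    subst hwv
    have hj : jp.val = 0 := by have := jp.isLt; have := hs w hv; omega
    have : (⟨w, jp⟩ : Σ v : V, Fin (s v)) = ⟨w, ⟨0, by rw [hs w hv]; omega⟩⟩ :=
      congrArg (Sigma.mk w) (Fin.ext hj)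
    exact this ▸ hp

/-- The expansion of a simplex (powerset) complex is vertex decomposable, general copy counts. -/
theorem vd_expC_powerset [Fintype V] : ∀ (N : ℕ) (F₀ : Finset V) (s : V → ℕ),
    (∀ v ∈ F₀, 1 ≤ s v) → (∑ v ∈ F₀, s v) ≤ N →
    VertexDecomposable (ExpC s {G : Finset V | G ⊆ F₀}) := by
  intro N
  induction N with
  | zero =>
    intro F₀ s hs hsum
    refine vd_expC_powerset_simplex (fun v hv => ?_)
    have h1 := Finset.single_le_sum (f := s) (fun i _ => Nat.zero_le _) hv
    have h2 := hs v hv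
    omega
  | succ N ihN =>
    intro F₀ s hs hsum
    by_cases hex : ∃ x ∈ F₀, 2 ≤ s x
    · obtain ⟨x, hx, hsx⟩ := hex
      have hdc := powerset_down F₀
      have had : Adequate s {G : Finset V | G ⊆ F₀} := by
        intro v hv F hF hvF
        have := hs v (hF hvF); omega
      have hpure := powerset_pure F₀
      -- del data
      set s' := Function.update s x (s x - 1) with hs'
      have hs'ge : ∀ v ∈ F₀, 1 ≤ s' v := by
        intro v hv
        by_cases hvx : v = x
        · subst hvx; simp only [hs', Function.update_self]; omega
        · simp only [hs', Function.update_of_ne hvx]; exact hs v hv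
      have had' : Adequate s' {G : Finset V | G ⊆ F₀} := by
        intro v hv F hF hvF
        have := hs'ge v (hF hvF); omega
      have hsum' : (∑ v ∈ F₀, s' v) ≤ N := by
        have h1 : (∑ v ∈ F₀, s' v) = (s x - 1) + ∑ v ∈ F₀ \ {x}, s v :=
          Finset.sum_update_of_mem hx s (s x - 1)
        have h2 : s x + ∑ v ∈ F₀.erase x, s v = ∑ v ∈ F₀, s v :=
          Finset.add_sum_erase F₀ s hx
        rw [Finset.erase_eq] at h2
        omega
      have hcorr := del_expC_corr (Δ := {G : Finset V | G ⊆ F₀}) x hsx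
      -- link data
      have hlink : link (ExpC s {G : Finset V | G ⊆ F₀}) ⟨x, (⟨s x - 1, by omega⟩ : Fin (s x))⟩
          = ExpC s {G : Finset V | G ⊆ F₀.erase x} := by
        rw [link_expC hdc x (⟨s x - 1, by omega⟩ : Fin (s x)), link_powerset hx]
      have hsumer : (∑ v ∈ F₀.erase x, s v) ≤ N := by
        have h2 : s x + ∑ v ∈ F₀.erase x, s v = ∑ v ∈ F₀, s v :=
          Finset.add_sum_erase F₀ s hx
        omega
      have hader : Adequate s {G : Finset V | G ⊆ F₀.erase x} := by
        intro v hv F hF hvF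
        have := hs v (Finset.erase_subset x F₀ (hF hvF)); omega
      refine VertexDecomposable.step _ ⟨x, (⟨s x - 1, by omega⟩ : Fin (s x))⟩ ?_ ?_ ?_ ?_
      · exact hcorr.pure (expC_pure hdc had' hpure)
      · rw [hlink]
        exact expC_pure (powerset_down _) hader (powerset_pure _)
      · exact hcorr.vd (ihN F₀ s' hs'ge hsum')
      · rw [hlink]
        exact ihN (F₀.erase x) s (fun v hv => hs v (Finset.erase_subset x F₀ hv)) hsumer
    · push_neg at hex
      refine vd_expC_powerset_simplex (fun v hv => ?_)
      have h1 := hs v hv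
      have h2 := hex v hv
      omega

/-- Main engine: vertex decomposability is preserved by expansion. -/
theorem vd_expC [Fintype V] {Δ : Set (Finset V)} (hvd : VertexDecomposable Δ) :
    DownClosed Δ → IsPure Δ → ∀ s : V → ℕ, Adequate s Δ → VertexDecomposable (ExpC s Δ) := by
  induction hvd with
  | simplex Δ hex =>
    intro hdc _hpure s had
    obtain ⟨F₀, hF₀, huniq⟩ := hex
    rw [eq_powerset_of_unique_facet hdc hF₀ huniq]
    refine vd_expC_powerset (∑ v ∈ F₀, s v) F₀ s (fun v hv => ?_) le_rfl
    rcases Nat.eq_zero_or_pos (s v) with h0 | h0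
    · exact absurd hv (had v h0 F₀ hF₀.1)
    · exact h0
  | step Δ x hdp hlp hd hl ihd ihl =>
    intro hdc hpure s₀ had₀
    have hdcd := del_down hdc x
    have hdcl := link_down hdc x
    have key : ∀ (N : ℕ) (s : V → ℕ), Adequate s Δ → (∑ v, s v) ≤ N →
        VertexDecomposable (ExpC s Δ) := by
      intro N
      induction N with
      | zero =>
        intro s had hsum
        have hx0 : s x = 0 := by
          have := Finset.single_le_sum (f := s) (fun i _ => Nat.zero_le _)
            (Finset.mem_univ x)
          omega
        have hΔ : del Δ x = Δ := by
          ext F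
          exact ⟨fun h => h.1, fun h => ⟨h, had x hx0 F h⟩⟩
        rw [← hΔ]
        exact ihd (hΔ.symm ▸ hdc) hdp s (hΔ.symm ▸ had)
      | succ N ihN =>
        intro s had hsum
        rcases Nat.lt_or_ge (s x) 1 with h0 | h1
        · have hx0 : s x = 0 := by omega
          have hΔ : del Δ x = Δ := by
            ext F
            exact ⟨fun h => h.1, fun h => ⟨h, had x hx0 F h⟩⟩
          rw [← hΔ]
          exact ihd (hΔ.symm ▸ hdc) hdp s (hΔ.symm ▸ had)
        · have hadd : Adequate s (del Δ x) := adequate_mono (del_subset Δ x) had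
          have hadl : Adequate s (link Δ x) := adequate_mono (link_subset Δ x) had
          rcases Nat.lt_or_ge (s x) 2 with hx1 | hx2
          · have hsx1 : s x = 1 := by omega
            have hdel := del_expC_of_one (Δ := Δ) hsx1 (⟨0, by omega⟩ : Fin (s x))
            have hlink := link_expC (Δ := Δ) hdc x (⟨0, by omega⟩ : Fin (s x))
            refine VertexDecomposable.step _ ⟨x, (⟨0, by omega⟩ : Fin (s x))⟩ ?_ ?_ ?_ ?_
            · rw [hdel]; exact expC_pure hdcd hadd hdp
            · rw [hlink]; exact expC_pure hdcl hadl hlp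
            · rw [hdel]; exact ihd hdcd hdp s hadd
            · rw [hlink]; exact ihl hdcl hlp s hadl
          · set s' := Function.update s x (s x - 1) with hs'
            have had' : Adequate s' Δ := by
              intro v hv F hF
              by_cases hvx : v = x
              · subst hvx
                rw [hs', Function.update_self] at hv
                omega
              · rw [hs', Function.update_of_ne hvx] at hv
                exact had v hv F hF
            have hsum' : (∑ v, s' v) ≤ N := by
              have h1 : (∑ v, s' v) = (s x - 1) + ∑ v ∈ Finset.univ \ {x}, s v :=
                Finset.sum_update_of_mem (Finset.mem_univ x) s (s x - 1)
              have h2 : s x + ∑ v ∈ Finset.univ.erase x, s v = ∑ v, s v :=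
                Finset.add_sum_erase Finset.univ s (Finset.mem_univ x)
              rw [Finset.erase_eq] at h2
              omega
            have hcorr := del_expC_corr (Δ := Δ) x hx2
            have hlink := link_expC (Δ := Δ) hdc x (⟨s x - 1, by omega⟩ : Fin (s x))
            refine VertexDecomposable.step _ ⟨x, (⟨s x - 1, by omega⟩ : Fin (s x))⟩ ?_ ?_ ?_ ?_
            · exact hcorr.pure (expC_pure hdc had' hpure)
            · rw [hlink]; exact expC_pure hdcl hadl hlp
            · exact hcorr.vd (ihN s' had' hsum')
            · rw [hlink]; exact ihl hdcl hlp s hadl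
    exact key (∑ v, s₀ v) s₀ had₀ le_rfl

theorem nat_base_lt {B a c j : ℕ} (hj : j < B) (hac : a < c) (k : ℕ) :
    a * B + j < c * B + k := by
  have h1 : a * B + j < (a + 1) * B := by
    have h2 : (a + 1) * B = a * B + B := by ring
    omega
  have h2 : (a + 1) * B ≤ c * B := Nat.mul_le_mul_right B hac
  omega

theorem nat_base_cancel {B a c j k : ℕ} (hj : j < B) (hk : k < B)
    (h : a * B + j = c * B + k) : a = c ∧ j = k := by
  rcases lt_trichotomy a c with h1 | h1 | h1
  · exact absurd h (Nat.ne_of_lt (nat_base_lt hj h1 k))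
  · subst h1; omega
  · exact absurd h.symm (Nat.ne_of_lt (nat_base_lt hk h1 j))

section Rank

variable [Fintype V] (s : V → ℕ) (B : ℕ)

/-- A rank function on the vertices of the expansion. -/
noncomputable def rnk (p : Σ v : V, Fin (s v)) : ℕ :=
  (Fintype.equivFin V p.1).val * B + p.2.val

theorem rnk_inj (hsB : ∀ v, s v ≤ B) : ∀ p q, rnk s B p = rnk s B q → p = q := by
  rintro ⟨v, jv⟩ ⟨w, jw⟩ h
  have hj : jv.val < B := lt_of_lt_of_le jv.isLt (hsB v)
  have hk : jw.val < B := lt_of_lt_of_le jw.isLt (hsB w)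
  obtain ⟨h1, h2⟩ := nat_base_cancel hj hk h
  have hvw : v = w := (Fintype.equivFin V).injective (Fin.ext h1)
  subst hvw
  exact congrArg (Sigma.mk v) (Fin.ext h2)

theorem rnk_lt (hsB : ∀ v, s v ≤ B) (p : Σ v : V, Fin (s v)) :
    rnk s B p < Fintype.card V * B := by
  have h1 : ((Fintype.equivFin V) p.1).val < Fintype.card V := ((Fintype.equivFin V) p.1).isLt
  have h2 : p.2.val < B := lt_of_lt_of_le p.2.isLt (hsB p.1)
  have h3 := nat_base_lt h2 h1 0
  simpa [rnk] using h3

/-- The binary key of a face of the expansion. -/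
noncomputable def fkey (M : Finset (Σ v : V, Fin (s v))) : ℕ :=
  ∑ p ∈ M, 2 ^ rnk s B p

theorem sum_two_pow_range_lt (r : ℕ) : (∑ i ∈ Finset.range r, 2 ^ i) < 2 ^ r := by
  induction r with
  | zero => simp
  | succ r ih =>
    rw [Finset.sum_range_succ]
    have : 2 ^ (r + 1) = 2 ^ r * 2 := pow_succ 2 r
    omega

theorem fkey_lt_pow (hsB : ∀ v, s v ≤ B) (M : Finset (Σ v : V, Fin (s v))) (r : ℕ)
    (hr : ∀ p ∈ M, rnk s B p < r) : fkey s B M < 2 ^ r := by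
  have h1 : fkey s B M = ∑ i ∈ M.image (rnk s B), 2 ^ i := by
    rw [Finset.sum_image (fun p hp q hq h => rnk_inj s B hsB p q h)]
    rfl
  have h2 : M.image (rnk s B) ⊆ Finset.range r := by
    intro i hi
    obtain ⟨p, hp, rfl⟩ := Finset.mem_image.1 hi
    exact Finset.mem_range.2 (hr p hp)
  have h3 : (∑ i ∈ M.image (rnk s B), 2 ^ i) ≤ ∑ i ∈ Finset.range r, 2 ^ i :=
    Finset.sum_le_sum_of_subset h2
  have h4 := sum_two_pow_range_lt r
  omega

theorem fkey_lt_of (hsB : ∀ v, s v ≤ B) {M N : Finset (Σ v : V, Fin (s v))}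
    {w : Σ v : V, Fin (s v)} (hwN : w ∈ N) (hwM : w ∉ M)
    (hmax : ∀ p ∈ M, p ∉ N → rnk s B p < rnk s B w) : fkey s B M < fkey s B N := by
  have hM : fkey s B (M ∩ N) + fkey s B (M \ N) = fkey s B M :=
    Finset.sum_inter_add_sum_sdiff M N _
  have hN : fkey s B (N ∩ M) + fkey s B (N \ M) = fkey s B N :=
    Finset.sum_inter_add_sum_sdiff N M _
  have h1 : fkey s B (M \ N) < 2 ^ rnk s B w := by
    refine fkey_lt_pow s B hsB _ _ (fun p hp => ?_)
    have hp' := Finset.mem_sdiff.1 hp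
    exact hmax p hp'.1 hp'.2
  have h2 : 2 ^ rnk s B w ≤ fkey s B (N \ M) :=
    Finset.single_le_sum (f := fun p => 2 ^ rnk s B p) (fun _ _ => Nat.zero_le _)
      (Finset.mem_sdiff.2 ⟨hwN, hwM⟩)
  have h3 : N ∩ M = M ∩ N := Finset.inter_comm N M
  rw [h3] at hN
  omega

theorem fkey_inj (hsB : ∀ v, s v ≤ B) {M N : Finset (Σ v : V, Fin (s v))}
    (h : fkey s B M = fkey s B N) : M = N := by
  by_contra hne
  have hD : ((M \ N) ∪ (N \ M)).Nonempty := by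
    rw [Finset.nonempty_iff_ne_empty]
    intro hemp
    obtain ⟨he1, he2⟩ := Finset.union_eq_empty.1 hemp
    exact hne (Finset.Subset.antisymm (Finset.sdiff_eq_empty_iff_subset.1 he1)
      (Finset.sdiff_eq_empty_iff_subset.1 he2))
  obtain ⟨w, hw, hmax⟩ := Finset.exists_max_image _ (rnk s B) hD
  have hstrict : ∀ p, p ∈ (M \ N) ∪ (N \ M) → p ≠ w → rnk s B p < rnk s B w := by
    intro p hp hpw
    have hle := hmax p hp
    rcases lt_or_eq_of_le hle with hlt | heq
    · exact hlt
    · exact absurd (rnk_inj s B hsB p w heq) hpw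
  rcases Finset.mem_union.1 hw with hw1 | hw1
  · have hw2 := Finset.mem_sdiff.1 hw1
    have : fkey s B N < fkey s B M := by
      refine fkey_lt_of s B hsB hw2.1 hw2.2 (fun p hp hpn => ?_)
      refine hstrict p (Finset.mem_union_right _ (Finset.mem_sdiff.2 ⟨hp, hpn⟩)) ?_
      rintro rfl
      exact hw2.2 hp
    omega
  · have hw2 := Finset.mem_sdiff.1 hw1
    have : fkey s B M < fkey s B N := by
      refine fkey_lt_of s B hsB hw2.1 hw2.2 (fun p hp hpn => ?_)
      refine hstrict p (Finset.mem_union_left _ (Finset.mem_sdiff.2 ⟨hp, hpn⟩)) ?_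
      rintro rfl
      exact hw2.2 hp
    omega

end Rank

/-- Main engine: shellability is preserved by expansion. -/
theorem shellable_expC [Fintype V] {s : V → ℕ} {Δ : Set (Finset V)} (hdc : DownClosed Δ)
    (had : Adequate s Δ) (hsh : Shellable Δ) : Shellable (ExpC s Δ) := by
  classical
  obtain ⟨hp, t, F, hall, hsurj, hinjF, hcond⟩ := hsh
  refine ⟨expC_pure hdc had hp, ?_⟩
  set B := (Finset.univ.sup s) + 1 with hBdef
  have hsB : ∀ v, s v ≤ B := fun v =>
    le_trans (Finset.le_sup (Finset.mem_univ v)) (by omega)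
  set R := Fintype.card V * B with hRdef
  have hfkR : ∀ M : Finset (Σ v : V, Fin (s v)), fkey s B M < 2 ^ R :=
    fun M => fkey_lt_pow s B hsB M R (fun p _ => rnk_lt s B hsB p)
  set idx : Finset (Σ v : V, Fin (s v)) → ℕ := fun M =>
    if h : ∃ i : Fin t, F i = M.image Sigma.fst then (Classical.choose h).val else 0
    with hidxdef
  have hidxF : ∀ (M : Finset (Σ v : V, Fin (s v))) (i : Fin t),
      F i = M.image Sigma.fst → idx M = i.val := by
    intro M i hi
    have h : ∃ i : Fin t, F i = M.image Sigma.fst := ⟨i, hi⟩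
    have hspec := Classical.choose_spec h
    have heq : Classical.choose h = i := hinjF (by rw [hspec, hi])
    simp only [hidxdef, dif_pos h, heq]
  set Key : Finset (Σ v : V, Fin (s v)) → ℕ := fun M => idx M * 2 ^ R + fkey s B M
    with hKeydef
  have hKeyInj : ∀ M N, Key M = Key N → M = N := by
    intro M N h
    obtain ⟨h1, h2⟩ := nat_base_cancel (hfkR M) (hfkR N) h
    exact fkey_inj s B hsB h2
  have hKeyLt1 : ∀ M N, idx M < idx N → Key M < Key N := by
    intro M N h
    exact nat_base_lt (B := 2 ^ R) (hfkR M) h (fkey s B N)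
  have hKeyLt2 : ∀ M N, idx M = idx N → fkey s B M < fkey s B N → Key M < Key N := by
    intro M N h1 h2
    simp only [hKeydef, h1]
    omega
  have hKeyCases : ∀ M N, Key M < Key N →
      idx M < idx N ∨ (idx M = idx N ∧ fkey s B M < fkey s B N) := by
    intro M N h
    rcases lt_trichotomy (idx M) (idx N) with h1 | h1 | h1
    · exact Or.inl h1
    · refine Or.inr ⟨h1, ?_⟩
      simp only [hKeydef, h1] at h
      omega
    · exact absurd h (not_lt.2 (le_of_lt (hKeyLt1 N M h1)))
  have hpos : ∀ (k : Fin t) (v : V), v ∈ F k → 0 < s v := by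
    intro k v hv
    rcases Nat.eq_zero_or_pos (s v) with h | h
    · exact absurd hv (had v h (F k) (hall k).1)
    · exact h
  -- the facet set
  set FS : Finset (Finset (Σ v : V, Fin (s v))) :=
    Set.Finite.toFinset (Set.toFinite {M | IsFacet (ExpC s Δ) M}) with hFSdef
  have hFSmem : ∀ M, M ∈ FS ↔ IsFacet (ExpC s Δ) M := by
    intro M
    simp [hFSdef]
  set K : Finset ℕ := FS.image Key with hKdef
  set t' := K.card with ht'def
  set oiso := K.orderIsoOfFin rfl with hoisodef
  have hFen : ∀ i : Fin t', ∃ M, IsFacet (ExpC s Δ) M ∧ Key M = (oiso i : ℕ) := by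
    intro i
    have hmem : (oiso i : ℕ) ∈ K := (oiso i).2
    obtain ⟨M, hM, hMK⟩ := Finset.mem_image.1 hmem
    exact ⟨M, (hFSmem M).1 hM, hMK⟩
  choose Fen hFenFac hFenKey using hFen
  have hlt : ∀ i j : Fin t', i < j → Key (Fen i) < Key (Fen j) := by
    intro i j hij
    rw [hFenKey, hFenKey]
    exact_mod_cast oiso.strictMono hij
  have hltr : ∀ i j : Fin t', Key (Fen i) < Key (Fen j) → i < j := by
    intro i j h
    by_contra hn
    rcases lt_or_eq_of_le (not_lt.1 hn) with h1 | h1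
    · have := hlt j i h1
      omega
    · rw [h1] at h
      omega
  have hFenInj : Function.Injective Fen := by
    intro i j h
    by_contra hn
    rcases Ne.lt_or_gt hn with h1 | h1
    · have := hlt i j h1
      rw [h] at this
      omega
    · have := hlt j i h1
      rw [h] at this
      omega
  have hFenSurj : ∀ M, IsFacet (ExpC s Δ) M → ∃ i, Fen i = M := by
    intro M hM
    have hmem : Key M ∈ K := Finset.mem_image_of_mem Key ((hFSmem M).2 hM)
    refine ⟨oiso.symm ⟨Key M, hmem⟩, hKeyInj _ _ ?_⟩
    rw [hFenKey]
    simp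
  refine ⟨t', Fen, hFenFac, hFenSurj, hFenInj, ?_⟩
  intro i j hij
  have hKey : Key (Fen j) < Key (Fen i) := hlt j i hij
  have hMfac := hFenFac i
  have hM'fac := hFenFac j
  have hMe := (expC_facet_iff hdc had).1 hMfac
  have hM'e := (expC_facet_iff hdc had).1 hM'fac
  obtain ⟨iA, hiA⟩ := hsurj _ hMe.2
  obtain ⟨iA', hiA'⟩ := hsurj _ hM'e.2
  have hidxM : idx (Fen i) = iA.val := hidxF _ iA hiA
  have hidxM' : idx (Fen j) = iA'.val := hidxF _ iA' hiA'
  rcases hKeyCases _ _ hKey with hcase | ⟨hcase1, hcase2⟩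
  · -- the underlying facets of Δ differ
    have hiAlt : iA' < iA := by
      rw [Fin.lt_def]
      omega
    obtain ⟨x, hxmem, k, hk, hdiff⟩ := hcond iA iA' hiAlt
    have hxmem' := Finset.mem_sdiff.1 hxmem
    have hxim : x ∈ (Fen i).image Sigma.fst := by
      rw [← hiA]
      exact hxmem'.1
    obtain ⟨px, hpxM, hpx1⟩ := Finset.mem_image.1 hxim
    have hFkΔ : F k ∈ Δ := (hall k).1
    have hposk : ∀ v : {a // a ∈ F k \ F iA}, 0 < s v.1 :=
      fun v => hpos k v.1 (Finset.mem_sdiff.1 v.2).1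
    set M'' : Finset (Σ v : V, Fin (s v)) :=
      (Fen i).filter (fun p => p.1 ∈ F k) ∪
        (F k \ F iA).attach.image (fun v => ⟨v.1, ⟨0, hposk v⟩⟩) with hM''def
    have himgfil : ((Fen i).filter (fun p => p.1 ∈ F k)).image Sigma.fst = F iA ∩ F k := by
      ext v
      simp only [Finset.mem_image, Finset.mem_filter, Finset.mem_inter]
      constructor
      · rintro ⟨p, ⟨hpM, hpk⟩, rfl⟩
        refine ⟨?_, hpk⟩
        rw [hiA]
        exact Finset.mem_image_of_mem Sigma.fst hpM
      · rintro ⟨hv1, hv2⟩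
        have hv : v ∈ (Fen i).image Sigma.fst := by
          rw [← hiA]
          exact hv1
        obtain ⟨p, hpM, rfl⟩ := Finset.mem_image.1 hv
        exact ⟨p, ⟨hpM, hv2⟩, rfl⟩
    have himgatt : ((F k \ F iA).attach.image
        (fun v => (⟨v.1, ⟨0, hposk v⟩⟩ : Σ v : V, Fin (s v)))).image Sigma.fst
        = F k \ F iA := by
      ext v
      simp only [Finset.mem_image, Finset.mem_attach, true_and, exists_exists_eq_and]
      constructor
      · rintro ⟨q, rfl⟩
        exact q.2
      · intro hv
        exact ⟨⟨v, hv⟩, rfl⟩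
    have himgM'' : M''.image Sigma.fst = F k := by
      rw [hM''def, Finset.image_union, himgfil, himgatt]
      ext v
      simp only [Finset.mem_union, Finset.mem_inter, Finset.mem_sdiff]
      tauto
    have hM''mem : M'' ∈ ExpC s Δ := by
      refine ⟨?_, by rw [himgM'']; exact hFkΔ⟩
      intro a ha b hb hab
      rw [hM''def] at ha hb
      rcases Finset.mem_union.1 ha with ha | ha <;> rcases Finset.mem_union.1 hb with hb | hb
      · exact hMe.1.1 a (Finset.mem_filter.1 ha).1 b (Finset.mem_filter.1 hb).1 hab
      · obtain ⟨qb, _, rfl⟩ := Finset.mem_image.1 hb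
        have haA : a.1 ∈ F iA := by
          rw [hiA]
          exact Finset.mem_image_of_mem Sigma.fst (Finset.mem_filter.1 ha).1
        have : qb.1 ∈ F iA := by
          have hb1 : (⟨qb.1, ⟨0, hposk qb⟩⟩ : Σ v : V, Fin (s v)).1 = qb.1 := rfl
          rw [← hb1, ← hab]
          exact haA
        exact absurd this (Finset.mem_sdiff.1 qb.2).2
      · obtain ⟨qa, _, rfl⟩ := Finset.mem_image.1 ha
        have hbA : b.1 ∈ F iA := by
          rw [hiA]
          exact Finset.mem_image_of_mem Sigma.fst (Finset.mem_filter.1 hb).1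
        have : qa.1 ∈ F iA := by
          have ha1 : (⟨qa.1, ⟨0, hposk qa⟩⟩ : Σ v : V, Fin (s v)).1 = qa.1 := rfl
          rw [← ha1, hab]
          exact hbA
        exact absurd this (Finset.mem_sdiff.1 qa.2).2
      · obtain ⟨qa, _, rfl⟩ := Finset.mem_image.1 ha
        obtain ⟨qb, _, rfl⟩ := Finset.mem_image.1 hb
        have : qa = qb := Subtype.ext hab
        rw [this]
    have hM''fac : IsFacet (ExpC s Δ) M'' := (expC_facet_iff hdc had).2
      ⟨hM''mem, by rw [himgM'']; exact hall k⟩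
    have hidxM'' : idx M'' = k.val := hidxF M'' k (by rw [himgM''])
    have hKeyM'' : Key M'' < Key (Fen i) := by
      refine hKeyLt1 _ _ ?_
      rw [hidxM'', hidxM]
      exact hk
    obtain ⟨i'', hi''⟩ := hFenSurj M'' hM''fac
    have hi''lt : i'' < i := hltr _ _ (by rw [hi'']; exact hKeyM'')
    have hxk : x ∉ F k := by
      have hx2 : x ∈ F iA \ F k := by
        rw [hdiff]
        exact Finset.mem_singleton_self x
      exact (Finset.mem_sdiff.1 hx2).2
    refine ⟨px, ?_, i'', hi''lt, ?_⟩
    · refine Finset.mem_sdiff.2 ⟨hpxM, ?_⟩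
      intro hpxM'
      have hxi : x ∈ (Fen j).image Sigma.fst := by
        rw [← hpx1]
        exact Finset.mem_image_of_mem Sigma.fst hpxM'
      rw [← hiA'] at hxi
      exact hxmem'.2 hxi
    · rw [hi'']
      ext q
      simp only [Finset.mem_sdiff, Finset.mem_singleton]
      constructor
      · rintro ⟨hqM, hqM''⟩
        by_cases hqx : q.1 = x
        · exact hMe.1.1 q hqM px hpxM (hqx.trans hpx1.symm)
        · exfalso
          have hqA : q.1 ∈ F iA := by
            rw [hiA]
            exact Finset.mem_image_of_mem Sigma.fst hqM
          have hqk : q.1 ∈ F k := by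
            by_contra hqk
            have hmem2 : q.1 ∈ F iA \ F k := Finset.mem_sdiff.2 ⟨hqA, hqk⟩
            rw [hdiff] at hmem2
            exact hqx (Finset.mem_singleton.1 hmem2)
          refine hqM'' ?_
          rw [hM''def]
          exact Finset.mem_union_left _ (Finset.mem_filter.2 ⟨hqM, hqk⟩)
      · intro hqpx
        rw [hqpx]
        refine ⟨hpxM, ?_⟩
        intro hpxM''
        have hxi : px.1 ∈ M''.image Sigma.fst := Finset.mem_image_of_mem Sigma.fst hpxM''
        rw [himgM'', hpx1] at hxi
        exact hxk hxi
  · -- the underlying facets coincide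
    have hiAeq : iA' = iA := Fin.ext (by omega)
    have himeq : (Fen j).image Sigma.fst = (Fen i).image Sigma.fst := by
      rw [← hiA', ← hiA, hiAeq]
    have hMM' : Fen i ≠ Fen j := by
      intro h
      have := hFenInj h
      subst this
      exact absurd hij (lt_irrefl i)
    have hD : ((Fen i \ Fen j) ∪ (Fen j \ Fen i)).Nonempty := by
      rw [Finset.nonempty_iff_ne_empty]
      intro hemp
      obtain ⟨he1, he2⟩ := Finset.union_eq_empty.1 hemp
      exact hMM' (Finset.Subset.antisymm (Finset.sdiff_eq_empty_iff_subset.1 he1)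
        (Finset.sdiff_eq_empty_iff_subset.1 he2))
    obtain ⟨w, hw, hmax⟩ := Finset.exists_max_image _ (rnk s B) hD
    have hstrict : ∀ p, p ∈ (Fen i \ Fen j) ∪ (Fen j \ Fen i) → p ≠ w →
        rnk s B p < rnk s B w := by
      intro p hp hpw
      rcases lt_or_eq_of_le (hmax p hp) with hlt2 | heq
      · exact hlt2
      · exact absurd (rnk_inj s B hsB p w heq) hpw
    have hwM : w ∈ Fen i \ Fen j := by
      rcases Finset.mem_union.1 hw with h1 | h1
      · exact h1
      · exfalso
        have h2 := Finset.mem_sdiff.1 h1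
        have hcontra : fkey s B (Fen i) < fkey s B (Fen j) := by
          refine fkey_lt_of s B hsB h2.1 h2.2 (fun p hp hpn => ?_)
          refine hstrict p (Finset.mem_union_left _ (Finset.mem_sdiff.2 ⟨hp, hpn⟩)) ?_
          rintro rfl
          exact h2.2 hp
        omega
    obtain ⟨hwMm, hwM'⟩ := Finset.mem_sdiff.1 hwM
    have hwim : w.1 ∈ (Fen j).image Sigma.fst := by
      rw [himeq]
      exact Finset.mem_image_of_mem Sigma.fst hwMm
    obtain ⟨q, hqM', hq1⟩ := Finset.mem_image.1 hwim
    have hqw : q ≠ w := fun h => hwM' (h ▸ hqM')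
    have hqM : q ∉ Fen i := by
      intro hqMm
      exact hqw (hMe.1.1 q hqMm w hwMm hq1)
    have hrq : rnk s B q < rnk s B w :=
      hstrict q (Finset.mem_union_right _ (Finset.mem_sdiff.2 ⟨hqM', hqM⟩)) hqw
    set M'' := insert q ((Fen i).erase w) with hM''def
    have hMdec : insert w ((Fen i).erase w) = Fen i := Finset.insert_erase hwMm
    have himgM'' : M''.image Sigma.fst = (Fen i).image Sigma.fst := by
      have h1 : M''.image Sigma.fst = insert q.1 (((Fen i).erase w).image Sigma.fst) := by
        rw [hM''def, Finset.image_insert]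
      have h2 : (Fen i).image Sigma.fst
          = insert w.1 (((Fen i).erase w).image Sigma.fst) := by
        conv_lhs => rw [← hMdec]
        rw [Finset.image_insert]
      rw [h1, h2, hq1]
    have hM''mem : M'' ∈ ExpC s Δ := by
      refine ⟨?_, by rw [himgM'']; exact hMe.1.2⟩
      intro a ha b hb hab
      rw [hM''def] at ha hb
      rcases Finset.mem_insert.1 ha with haq | ha2 <;>
        rcases Finset.mem_insert.1 hb with hbq | hb2
      · rw [haq, hbq]
      · exfalso
        have hbM : b ∈ Fen i := Finset.erase_subset w (Fen i) hb2
        have hbw : b = w := hMe.1.1 b hbM w hwMm (by rw [← hab, haq, hq1])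
        exact absurd (hbw ▸ hb2) (Finset.notMem_erase w (Fen i))
      · exfalso
        have haM : a ∈ Fen i := Finset.erase_subset w (Fen i) ha2
        have haw : a = w := hMe.1.1 a haM w hwMm (by rw [hab, hbq, hq1])
        exact absurd (haw ▸ ha2) (Finset.notMem_erase w (Fen i))
      · exact hMe.1.1 a (Finset.erase_subset w (Fen i) ha2) b
          (Finset.erase_subset w (Fen i) hb2) hab
    have hM''fac : IsFacet (ExpC s Δ) M'' := (expC_facet_iff hdc had).2
      ⟨hM''mem, by rw [himgM'']; exact hMe.2⟩
    have hidxM'' : idx M'' = iA.val := hidxF M'' iA (by rw [himgM'']; exact hiA)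
    have hwnotM'' : w ∉ M'' := by
      rw [hM''def]
      intro h
      rcases Finset.mem_insert.1 h with h1 | h1
      · exact hqw h1.symm
      · exact Finset.notMem_erase w (Fen i) h1
    have hfk : fkey s B M'' < fkey s B (Fen i) := by
      refine fkey_lt_of s B hsB hwMm hwnotM'' (fun p hp hpn => ?_)
      have hpq : p = q := by
        rw [hM''def] at hp
        rcases Finset.mem_insert.1 hp with h1 | h1
        · exact h1
        · exact absurd (Finset.erase_subset w (Fen i) h1) hpn
      rw [hpq]
      exact hrq
    have hKeyM'' : Key M'' < Key (Fen i) := hKeyLt2 _ _ (by omega) hfk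
    obtain ⟨i'', hi''⟩ := hFenSurj M'' hM''fac
    have hi''lt : i'' < i := hltr _ _ (by rw [hi'']; exact hKeyM'')
    refine ⟨w, Finset.mem_sdiff.2 ⟨hwMm, hwM'⟩, i'', hi''lt, ?_⟩
    rw [hi'']
    ext p
    simp only [Finset.mem_sdiff, Finset.mem_singleton]
    constructor
    · rintro ⟨hpM, hpM''⟩
      by_contra hpw
      refine hpM'' ?_
      rw [hM''def]
      exact Finset.mem_insert_of_mem (Finset.mem_erase.2 ⟨hpw, hpM⟩)
    · intro hpw2
      rw [hpw2]
      exact ⟨hwMm, hwnotM''⟩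

end ExpC

section Graphs

theorem indComplex_down {α : Type*} (G : SimpleGraph α) : DownClosed (indComplex G) :=
  fun F hF G' hG' v hv w hw => hF v (hG' hv) w (hG' hw)

theorem indComplex_corr {α β : Type*} [DecidableEq α] [DecidableEq β] {G : SimpleGraph α}
    {H : SimpleGraph β} (φ : G ≃g H) :
    Corresponds φ.toEquiv.toEmbedding (indComplex G) (indComplex H) := by
  intro F'
  constructor
  · intro hF'
    refine ⟨F'.map φ.symm.toEquiv.toEmbedding, ?_, ?_⟩
    · intro v hv w hw hadj
      obtain ⟨v', hv', rfl⟩ := Finset.mem_map.1 hv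
      obtain ⟨w', hw', rfl⟩ := Finset.mem_map.1 hw
      have hadj' : H.Adj v' w' := by
        have h2 := (SimpleGraph.Iso.map_adj_iff φ
          (v := φ.symm.toEquiv.toEmbedding v') (w := φ.symm.toEquiv.toEmbedding w')).2 hadj
        simpa using h2
      exact hF' v' hv' w' hw' hadj'
    · rw [Finset.map_map]
      ext x
      simp only [Finset.mem_map, Function.Embedding.trans_apply, Equiv.coe_toEmbedding]
      constructor
      · intro hx
        exact ⟨x, hx, by simp⟩
      · rintro ⟨y, hy, rfl⟩
        simpa using hy
  · rintro ⟨F, hF, rfl⟩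
    intro v hv w hw hadj
    obtain ⟨v', hv', rfl⟩ := Finset.mem_map.1 hv
    obtain ⟨w', hw', rfl⟩ := Finset.mem_map.1 hw
    exact hF v' hv' w' hw' ((SimpleGraph.Iso.map_adj_iff φ).1 hadj)

theorem indComplex_expansion {α : Type*} [DecidableEq α] (G : SimpleGraph α) (s : α → ℕ) :
    indComplex (expansion G s) = ExpC s (indComplex G) := by
  ext F
  constructor
  · intro hF
    constructor
    · intro p hp q hq hpq
      by_contra hne
      exact hF p hp q hq ⟨hne, Or.inr hpq⟩
    · intro v hv w hw hadj
      obtain ⟨p, hp, rfl⟩ := Finset.mem_image.1 hv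
      obtain ⟨q, hq, rfl⟩ := Finset.mem_image.1 hw
      refine hF p hp q hq ⟨?_, Or.inl hadj⟩
      rintro rfl
      exact G.loopless.irrefl _ hadj
  · rintro ⟨hinj, himg⟩ p hp q hq hadj
    obtain ⟨hne, hadj2 | heq⟩ := hadj
    · exact himg p.1 (Finset.mem_image_of_mem _ hp) q.1 (Finset.mem_image_of_mem _ hq) hadj2
    · exact hne (hinj p hp q hq heq)

/-- The expansion with constant fibers is isomorphic to the lexicographic product with a
complete graph. -/
def expansionIsoLex {α : Type*} (G : SimpleGraph α) (m : ℕ) :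
    expansion G (fun _ => m) ≃g lexProd G (⊤ : SimpleGraph (Fin m)) where
  toEquiv := Equiv.sigmaEquivProd α (Fin m)
  map_rel_iff' := by
    rintro ⟨v, j⟩ ⟨w, k⟩
    show (lexProd G (⊤ : SimpleGraph (Fin m))).Adj (v, j) (w, k) ↔
      (expansion G (fun _ => m)).Adj ⟨v, j⟩ ⟨w, k⟩
    constructor
    · rintro (hadj | ⟨heq, hne⟩)
      · refine ⟨?_, Or.inl hadj⟩
        intro h
        have : v = w := congrArg Sigma.fst h
        exact G.loopless.irrefl v (this ▸ hadj)
      · dsimp only at heq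
        subst heq
        refine ⟨?_, Or.inr rfl⟩
        intro h
        have hjk : j = k := by
          have := congrArg (fun p : (Σ _ : α, Fin m) => p.2) h
          simpa using this
        exact hne hjk
    · rintro ⟨hne, hadj | heq⟩
      · exact Or.inl hadj
      · dsimp only at heq
        subst heq
        refine Or.inr ⟨rfl, ?_⟩
        intro hjk
        dsimp only at hjk
        exact hne (by rw [hjk])

/-- The connection set for the circulant presentation of `C_n(S₁)[K_m]`. -/
def SS (n m : ℕ) (S₁ : Set ℕ) : Set ℕ :=
  {d | (1 ≤ d ∧ d ≤ n * m / 2) ∧ (d % n = 0 ∨ d % n ∈ S₁ ∨ n - d % n ∈ S₁)}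

theorem SS_subset (n m : ℕ) (S₁ : Set ℕ) : SS n m S₁ ⊆ Set.Icc 1 (n * m / 2) :=
  fun _ hd => ⟨hd.1.1, hd.1.2⟩

theorem Qsym {n m : ℕ} (hn : 1 ≤ n) (S₁ : Set ℕ) (d : ℕ) (hd1 : 1 ≤ d)
    (hd2 : d ≤ n * m - 1) :
    ((n * m - d) % n = 0 ∨ (n * m - d) % n ∈ S₁ ∨ n - (n * m - d) % n ∈ S₁) ↔
    (d % n = 0 ∨ d % n ∈ S₁ ∨ n - d % n ∈ S₁) := by
  have hnm : 1 ≤ n * m := by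
    rcases Nat.eq_zero_or_pos (n * m) with h | h
    · omega
    · exact h
  set r := d % n with hr
  have hrn : r < n := Nat.mod_lt d (by omega)
  rcases Nat.eq_zero_or_pos r with hr0 | hr0
  · -- both divisible
    have hdvd : n ∣ d := Nat.dvd_of_mod_eq_zero hr0
    have hdvd2 : n ∣ n * m := Dvd.intro m rfl
    have hdvd3 : n ∣ (n * m - d) := Nat.dvd_sub hdvd2 hdvd
    have h0 : (n * m - d) % n = 0 := by
      obtain ⟨c, hc⟩ := hdvd3
      rw [hc]
      exact Nat.mul_mod_right n c
    simp [h0, hr0]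
  · -- r ≥ 1
    have ht : (n * m - d) % n = n - r := by
      set t := (n * m - d) % n with htdef
      have htn : t < n := Nat.mod_lt _ (by omega)
      have h0 : n * m - d + d = n * m := by omega
      have h1 : (n * m - d + d) % n = 0 := by rw [h0]; exact Nat.mul_mod_right n m
      have h2 : (t + r) % n = 0 := by
        rw [htdef, hr, ← Nat.add_mod]
        exact h1
      obtain ⟨c, hc⟩ := Nat.dvd_of_mod_eq_zero h2
      have hcb : c < 2 := by
        by_contra hcb
        have : n * 2 ≤ n * c := Nat.mul_le_mul_left n (by omega)
        omega
      interval_cases c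
      · omega
      · omega
    rw [ht]
    have h1 : n - r ≠ 0 := by omega
    have h2 : n - (n - r) = r := by omega
    rw [h2]
    constructor
    · rintro (h | h | h)
      · exact absurd h h1
      · exact Or.inr (Or.inr h)
      · exact Or.inr (Or.inl h)
    · rintro (h | h | h)
      · omega
      · exact Or.inr (Or.inr h)
      · exact Or.inr (Or.inl h)

theorem mem_SS_or {n m : ℕ} (hn : 1 ≤ n) (S₁ : Set ℕ) (d : ℕ) (hd1 : 1 ≤ d)
    (hd2 : d ≤ n * m - 1) :
    (d ∈ SS n m S₁ ∨ (n * m - d) ∈ SS n m S₁) ↔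
    (d % n = 0 ∨ d % n ∈ S₁ ∨ n - d % n ∈ S₁) := by
  constructor
  · rintro (h | h)
    · exact h.2
    · exact (Qsym hn S₁ d hd1 hd2).1 h.2
  · intro hQ
    rcases le_or_gt d (n * m / 2) with hle | hlt
    · exact Or.inl ⟨⟨hd1, hle⟩, hQ⟩
    · refine Or.inr ⟨⟨by omega, by omega⟩, (Qsym hn S₁ d hd1 hd2).2 hQ⟩

theorem adj_helper (n m : ℕ) (hn : 1 ≤ n) (S₁ : Set ℕ) (a b j k : ℕ)
    (ha : a < n) (hb : b < n) (hj : j < m) (hk : k < m)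
    (hge : b + n * k ≤ a + n * j) :
    ((a ≠ b ∧ ((max a b - min a b) ∈ S₁ ∨ (n - (max a b - min a b)) ∈ S₁)) ∨
      (a = b ∧ j ≠ k))
    ↔ ((a + n * j ≠ b + n * k) ∧
       ((max (a + n * j) (b + n * k) - min (a + n * j) (b + n * k)) ∈ SS n m S₁ ∨
        (n * m - (max (a + n * j) (b + n * k) - min (a + n * j) (b + n * k)))
          ∈ SS n m S₁)) := by
  set u := a + n * j with hu
  set v := b + n * k with hv
  have hum : u < n * m := by
    have h1 : u < n * (j + 1) := by
      have : n * (j + 1) = n * j + n := by ring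
      omega
    have h2 : n * (j + 1) ≤ n * m := Nat.mul_le_mul_left n (by omega)
    omega
  have hd : max u v - min u v = u - v := by omega
  rw [hd]
  have humod : u % n = a := by
    rw [hu, Nat.add_mul_mod_self_left]
    exact Nat.mod_eq_of_lt ha
  have hvmod : v % n = b := by
    rw [hv, Nat.add_mul_mod_self_left]
    exact Nat.mod_eq_of_lt hb
  have hudiv : u / n = j := by
    rw [hu, Nat.add_mul_div_left a j (by omega), Nat.div_eq_of_lt ha]
    omega
  have hvdiv : v / n = k := by
    rw [hv, Nat.add_mul_div_left b k (by omega), Nat.div_eq_of_lt hb]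
    omega
  have huv_iff : u = v ↔ (a = b ∧ j = k) := by
    constructor
    · intro h
      constructor
      · rw [← humod, ← hvmod, h]
      · rw [← hudiv, ← hvdiv, h]
    · rintro ⟨rfl, rfl⟩
      rfl
  rcases lt_trichotomy a b with hab | hab | hab
  · -- a < b, so j > k
    have hjk : k < j := by
      by_contra hjk
      have h1 : n * j ≤ n * k := Nat.mul_le_mul_left n (by omega)
      omega
    have hne : u ≠ v := by
      intro h
      exact absurd (huv_iff.1 h).1 (by omega)
    set c := b - a with hc
    have hc1 : 1 ≤ c := by omega
    have hc2 : c < n := by omega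
    have hdval : u - v = (n - c) + n * (j - k - 1) := by
      have h1 : n * (j - k - 1) = n * j - n * k - n := by
        rw [Nat.mul_sub, Nat.mul_sub, Nat.mul_one]
      have h2 : n * k + n ≤ n * j := by
        have h3 : n * (k + 1) ≤ n * j := Nat.mul_le_mul_left n (by omega)
        have h4 : n * (k + 1) = n * k + n := by ring
        omega
      omega
    have hdmod : (u - v) % n = n - c := by
      rw [hdval, Nat.add_mul_mod_self_left]
      exact Nat.mod_eq_of_lt (by omega)
    have hd1 : 1 ≤ u - v := by omega
    have hd2 : u - v ≤ n * m - 1 := by omega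
    rw [mem_SS_or hn S₁ (u - v) hd1 hd2, hdmod]
    have hmaxab : max a b - min a b = c := by omega
    rw [hmaxab]
    have hnc0 : n - c ≠ 0 := by omega
    have hncc : n - (n - c) = c := by omega
    constructor
    · rintro (⟨_, h | h⟩ | ⟨h, _⟩)
      · exact ⟨hne, Or.inr (Or.inr (hncc.symm ▸ h))⟩
      · exact ⟨hne, Or.inr (Or.inl h)⟩
      · omega
    · rintro ⟨_, h | h | h⟩
      · exact absurd h hnc0
      · exact Or.inl ⟨by omega, Or.inr h⟩
      · rw [hncc] at h
        exact Or.inl ⟨by omega, Or.inl h⟩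
  · -- a = b
    subst hab
    have hjk : k ≤ j := by
      by_contra hjk
      have h1 : n * (j + 1) ≤ n * k := Nat.mul_le_mul_left n (by omega)
      have h2 : n * (j + 1) = n * j + n := by ring
      omega
    have hdval : u - v = n * (j - k) := by
      have h1 : n * (j - k) = n * j - n * k := Nat.mul_sub n j k
      have h2 : n * k ≤ n * j := Nat.mul_le_mul_left n hjk
      omega
    have huvne : u ≠ v ↔ j ≠ k := by
      constructor
      · intro h1 h2
        exact h1 (huv_iff.2 ⟨rfl, h2⟩)
      · intro h1 h2
        exact h1 (huv_iff.1 h2).2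
    constructor
    · rintro (⟨h, _⟩ | ⟨_, h⟩)
      · omega
      · have hne : u ≠ v := huvne.2 h
        have hd1 : 1 ≤ u - v := by omega
        have hd2 : u - v ≤ n * m - 1 := by omega
        refine ⟨hne, (mem_SS_or hn S₁ (u - v) hd1 hd2).2 ?_⟩
        rw [hdval]
        exact Or.inl (Nat.mul_mod_right n _)
    · rintro ⟨hne, _⟩
      exact Or.inr ⟨rfl, huvne.1 hne⟩
  · -- b < a, so j ≥ k
    have hjk : k ≤ j := by
      by_contra hjk
      have h1 : n * (j + 1) ≤ n * k := Nat.mul_le_mul_left n (by omega)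
      have h2 : n * (j + 1) = n * j + n := by ring
      omega
    have hne : u ≠ v := by
      intro h
      exact absurd (huv_iff.1 h).1 (by omega)
    set c := a - b with hc
    have hc1 : 1 ≤ c := by omega
    have hc2 : c < n := by omega
    have hdval : u - v = c + n * (j - k) := by
      have h1 : n * (j - k) = n * j - n * k := Nat.mul_sub n j k
      have h2 : n * k ≤ n * j := Nat.mul_le_mul_left n hjk
      omega
    have hdmod : (u - v) % n = c := by
      rw [hdval, Nat.add_mul_mod_self_left]
      exact Nat.mod_eq_of_lt (by omega)
    have hd1 : 1 ≤ u - v := by omega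
    have hd2 : u - v ≤ n * m - 1 := by omega
    rw [mem_SS_or hn S₁ (u - v) hd1 hd2, hdmod]
    have hmaxab : max a b - min a b = c := by omega
    rw [hmaxab]
    constructor
    · rintro (⟨_, h | h⟩ | ⟨h, _⟩)
      · exact ⟨hne, Or.inr (Or.inl h)⟩
      · exact ⟨hne, Or.inr (Or.inr h)⟩
      · omega
    · rintro ⟨_, h | h | h⟩
      · omega
      · exact Or.inl ⟨by omega, Or.inl h⟩
      · exact Or.inl ⟨by omega, Or.inr h⟩

/-- The pair equivalence `Fin n × Fin m ≃ Fin (n * m)`. -/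
def finPairEquiv (n m : ℕ) (hn : 1 ≤ n) : (Fin n × Fin m) ≃ Fin (n * m) where
  toFun p := ⟨p.1.val + n * p.2.val, by
    have h1 := p.1.isLt
    have h2 := p.2.isLt
    have h3 : n * (p.2.val + 1) ≤ n * m := Nat.mul_le_mul_left n (by omega)
    have h4 : n * (p.2.val + 1) = n * p.2.val + n := by ring
    omega⟩
  invFun u := (⟨u.val % n, Nat.mod_lt _ (by omega)⟩, ⟨u.val / n, by
    have h1 := u.isLt
    have h3 : n * m = m * n := Nat.mul_comm n m
    exact (Nat.div_lt_iff_lt_mul (by omega)).2 (by omega)⟩)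
  left_inv := by
    rintro ⟨⟨a, ha⟩, ⟨j, hj⟩⟩
    have h1 : (a + n * j) % n = a := by
      rw [Nat.add_mul_mod_self_left]
      exact Nat.mod_eq_of_lt ha
    have h2 : (a + n * j) / n = j := by
      rw [Nat.add_mul_div_left a j (by omega), Nat.div_eq_of_lt ha]
      omega
    simp only [Prod.mk.injEq, Fin.mk.injEq]
    exact ⟨h1, h2⟩
  right_inv := by
    rintro ⟨u, hu⟩
    simp only [Fin.mk.injEq]
    exact Nat.mod_add_div u n

/-- The lexicographic product of a circulant with a complete graph is circulant. -/
def lexCircIso (n m : ℕ) (hn : 1 ≤ n) (S₁ : Set ℕ) :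
    lexProd (circulant n S₁) (⊤ : SimpleGraph (Fin m)) ≃g
      circulant (n * m) (SS n m S₁) where
  toEquiv := finPairEquiv n m hn
  map_rel_iff' := by
    rintro ⟨⟨a, ha⟩, ⟨j, hj⟩⟩ ⟨⟨b, hb⟩, ⟨k, hk⟩⟩
    show (circulant (n * m) (SS n m S₁)).Adj ⟨a + n * j, _⟩ ⟨b + n * k, _⟩ ↔
      (lexProd (circulant n S₁) (⊤ : SimpleGraph (Fin m))).Adj (⟨a, ha⟩, ⟨j, hj⟩)
        (⟨b, hb⟩, ⟨k, hk⟩)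
    have hlhs : (circulant (n * m) (SS n m S₁)).Adj ⟨a + n * j, by
          have h3 : n * (j + 1) ≤ n * m := Nat.mul_le_mul_left n (by omega)
          have h4 : n * (j + 1) = n * j + n := by ring
          omega⟩ ⟨b + n * k, by
          have h3 : n * (k + 1) ≤ n * m := Nat.mul_le_mul_left n (by omega)
          have h4 : n * (k + 1) = n * k + n := by ring
          omega⟩ ↔
        ((a + n * j ≠ b + n * k) ∧
          ((max (a + n * j) (b + n * k) - min (a + n * j) (b + n * k)) ∈ SS n m S₁ ∨
          (n * m - (max (a + n * j) (b + n * k) - min (a + n * j) (b + n * k)))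
            ∈ SS n m S₁)) := by
      constructor
      · rintro ⟨h1, h2⟩
        refine ⟨?_, h2⟩
        intro h
        exact h1 (Fin.ext h)
      · rintro ⟨h1, h2⟩
        refine ⟨?_, h2⟩
        intro h
        exact h1 (congrArg Fin.val h)
    have hrhs : (lexProd (circulant n S₁) (⊤ : SimpleGraph (Fin m))).Adj
          ((⟨a, ha⟩ : Fin n), (⟨j, hj⟩ : Fin m)) (⟨b, hb⟩, ⟨k, hk⟩) ↔
        ((a ≠ b ∧ ((max a b - min a b) ∈ S₁ ∨ (n - (max a b - min a b)) ∈ S₁)) ∨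
          (a = b ∧ j ≠ k)) := by
      constructor
      · rintro (⟨h1, h2⟩ | ⟨h1, h2⟩)
        · refine Or.inl ⟨fun h => h1 (Fin.ext h), h2⟩
        · refine Or.inr ⟨congrArg Fin.val h1, fun h => ?_⟩
          rw [SimpleGraph.top_adj] at h2
          exact h2 (Fin.ext h)
      · rintro (⟨h1, h2⟩ | ⟨h1, h2⟩)
        · exact Or.inl ⟨fun h => h1 (congrArg Fin.val h), h2⟩
        · refine Or.inr ⟨Fin.ext h1, ?_⟩
          rw [SimpleGraph.top_adj]
          intro h
          exact h2 (congrArg Fin.val h)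
    rw [hlhs, hrhs]
    rcases le_total (b + n * k) (a + n * j) with hge | hge
    · exact (adj_helper n m hn S₁ a b j k ha hb hj hk hge).symm
    · have h := adj_helper n m hn S₁ b a k j hb ha hk hj hge
      rw [max_comm a b, min_comm a b, max_comm (a + n * j) (b + n * k),
        min_comm (a + n * j) (b + n * k), ne_comm (a := a), ne_comm (a := j),
        ne_comm (a := a + n * j), eq_comm (a := a)]
      exact h.symm

end Graphs

theorem stmt17 (n : ℕ) (hn : 1 ≤ n) (S₁ : Set ℕ) (hS₁ : S₁ ⊆ Set.Icc 1 (n / 2))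
    (m : ℕ) (hm : 1 ≤ m) :
    (Shellable (indComplex (circulant n S₁)) →
      ∃ S : Set ℕ, S ⊆ Set.Icc 1 (n * m / 2) ∧
        Nonempty (lexProd (circulant n S₁) (⊤ : SimpleGraph (Fin m)) ≃g
          circulant (n * m) S) ∧
        Shellable (indComplex (circulant (n * m) S))) ∧
    ((IsPure (indComplex (circulant n S₁)) ∧
        VertexDecomposable (indComplex (circulant n S₁))) →
      ∃ S : Set ℕ, S ⊆ Set.Icc 1 (n * m / 2) ∧
        Nonempty (lexProd (circulant n S₁) (⊤ : SimpleGraph (Fin m)) ≃g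
          circulant (n * m) S) ∧
        IsPure (indComplex (circulant (n * m) S)) ∧
        VertexDecomposable (indComplex (circulant (n * m) S))) := by
  classical
  have had : Adequate (fun _ : Fin n => m) (indComplex (circulant n S₁)) := by
    intro v hv F hF hvF
    have hm0 : m = 0 := hv
    omega
  have hdc : DownClosed (indComplex (circulant n S₁)) := indComplex_down _
  have ψ : expansion (circulant n S₁) (fun _ => m) ≃g circulant (n * m) (SS n m S₁) :=
    (expansionIsoLex (circulant n S₁) m).trans (lexCircIso n m hn S₁)
  have hcorr : Corresponds ψ.toEquiv.toEmbedding
      (indComplex (expansion (circulant n S₁) (fun _ => m)))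
      (indComplex (circulant (n * m) (SS n m S₁))) := indComplex_corr ψ
  have hexp : indComplex (expansion (circulant n S₁) (fun _ => m))
      = ExpC (fun _ => m) (indComplex (circulant n S₁)) := indComplex_expansion _ _
  constructor
  · intro hsh
    refine ⟨SS n m S₁, SS_subset n m S₁, ⟨lexCircIso n m hn S₁⟩, ?_⟩
    have h1 : Shellable (ExpC (fun _ => m) (indComplex (circulant n S₁))) :=
      shellable_expC hdc had hsh
    rw [← hexp] at h1
    exact hcorr.shellable h1
  · rintro ⟨hpure, hvd⟩
    refine ⟨SS n m S₁, SS_subset n m S₁, ⟨lexCircIso n m hn S₁⟩, ?_, ?_⟩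
    · have h1 : IsPure (ExpC (fun _ => m) (indComplex (circulant n S₁))) :=
        expC_pure hdc had hpure
      rw [← hexp] at h1
      exact hcorr.pure h1
    · have h1 : VertexDecomposable (ExpC (fun _ => m) (indComplex (circulant n S₁))) :=
        vd_expC hvd hdc hpure (fun _ => m) had
      rw [← hexp] at h1
      exact hcorr.vd h1
end
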